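/- arXiv:2402.12643 — 8 statements merged into one kernel-verified Lean document; each statement's English description precedes it below -/
import Mathlib

section
/- Let n ≥ 2 and let i, j, k, l ∈ {1,…,n} with i ≠ j and k ≠ l. Assume that it is not the case that (j = k and i ≠ l), and not the case that (i = l and j ≠ k). Then for all c, d ∈ [0,1] there exist c', d' ∈ [0,1] such that K^{kl}(d)·K^{ij}(c) = K^{ij}(d')·K^{kl}(c'). -/
noncomputable section

abbrev Pt : Type := EuclideanSpace ℝ (Fin 2)

/-- Convex hull of the vertices of a polygon. -/
def hull {n : ℕ} (P : Fin n → Pt) : Set Pt := convexHull ℝ (Set.range P)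

/-- `P'` is degenerately contained in the `n`-gon `P`: there is an interpolating
`m`-gon with `m < n`. -/
def DegenIn {k n : ℕ} (P' : Fin k → Pt) (P : Fin n → Pt) : Prop :=
  ∃ m : ℕ, m < n ∧ ∃ Q : Fin m → Pt, hull P' ⊆ hull Q ∧ hull Q ⊆ hull P

/-- `P'` is obtained from `P` by a single pull-in move. -/
def PullIn {n : ℕ} (P P' : Fin n → Pt) : Prop :=
  ∃ i j : Fin n, i ≠ j ∧ P' i ∈ segment ℝ (P i) (P j) ∧ ∀ k, k ≠ i → P' k = P k

/-- `P'` is obtained from `P` by a single push-out move (the inverse of a pull-in). -/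
def PushOut {n : ℕ} (P P' : Fin n → Pt) : Prop :=
  ∃ i j : Fin n, i ≠ j ∧ P i ∈ segment ℝ (P j) (P' i) ∧ ∀ k, k ≠ i → P' k = P k

/-- A chain of exactly `m` moves (given by the relation `R`) from `P` to `P'`. -/
def MoveChain {n : ℕ} (R : (Fin n → Pt) → (Fin n → Pt) → Prop) (m : ℕ)
    (P P' : Fin n → Pt) : Prop :=
  ∃ Q : Fin (m + 1) → Fin n → Pt, Q 0 = P ∧ Q (Fin.last m) = P' ∧
    ∀ s : Fin m, R (Q s.castSucc) (Q s.succ)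

/-- `P'` is attainable from `P` by a decreasing path of polygons. -/
def Attainable {n : ℕ} (P P' : Fin n → Pt) : Prop :=
  ∃ c : ℝ, 0 ≤ c ∧ ∃ F : ℝ → Fin n → Pt,
    ContinuousOn F (Set.Icc 0 c) ∧ F 0 = P ∧ F c = P' ∧
    ∀ t t' : ℝ, t ∈ Set.Icc 0 c → t' ∈ Set.Icc 0 c → t ≤ t' → hull (F t') ⊆ hull (F t)

/-- Determinant of the 3×3 matrix with rows (a,1), (b,1), (c,1). -/
def det3 (a b c : Pt) : ℝ := (b 0 - a 0) * (c 1 - a 1) - (b 1 - a 1) * (c 0 - a 0)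

/-- `P` is a convex polygon oriented counterclockwise. -/
def CCW {n : ℕ} [NeZero n] (P : Fin n → Pt) : Prop :=
  ∀ i j : Fin n, j ≠ i → j ≠ i + 1 → 0 < det3 (P i) (P (i + 1)) (P j)

/-- The boundary of a polygon: the union of its edges. -/
def bdry {n : ℕ} [NeZero n] (P : Fin n → Pt) : Set Pt :=
  ⋃ i : Fin n, segment ℝ (P i) (P (i + 1))

/-- The threshold set of `P`: attainable polygons with a vertex on `∂P`. -/
def Threshold {n : ℕ} [NeZero n] (P : Fin n → Pt) : Set (Fin n → Pt) :=
  {P' | Attainable P P' ∧ ∃ i, P' i ∈ bdry P}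

/-- A neighbor pull-in move: a pull-in of a vertex toward one of its two neighbors. -/
def NbrPullIn {n : ℕ} [NeZero n] (P P' : Fin n → Pt) : Prop :=
  ∃ i j : Fin n, (j = i - 1 ∨ j = i + 1) ∧ i ≠ j ∧ P' i ∈ segment ℝ (P i) (P j) ∧
    ∀ k, k ≠ i → P' k = P k

/-- The vestibule of `P`: polygons one neighbor pull-in move away from the threshold. -/
def Vestibule {n : ℕ} [NeZero n] (P : Fin n → Pt) : Set (Fin n → Pt) :=
  {P' | ∃ Q ∈ Threshold P, NbrPullIn Q P'}

/-- A polygon is set-convex if no vertex lies in the convex hull of the others. -/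
def SetConvex {n : ℕ} (P : Fin n → Pt) : Prop :=
  ∀ i : Fin n, P i ∉ convexHull ℝ (P '' {j | j ≠ i})

/-- A maximal degenerate `(n-1)`-gon inscribed in the convex `n`-gon `P`. -/
def MaxDegen {n : ℕ} [NeZero n] (P : Fin n → Pt) (Q : Fin (n - 1) → Pt) : Prop :=
  (∀ k, Q k ∈ bdry P) ∧
  ∀ k : Fin (n - 1),
    (∃ i : Fin n, Q k = P i ∧ ∀ k' : Fin (n - 1), k' ≠ k → Q k' ≠ P i) ∨
    (∃ i : Fin n, Q k ∈ segment ℝ (P i) (P (i + 1)) ∧ (∀ j : Fin n, Q k ≠ P j) ∧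
      ∀ k' : Fin (n - 1), k' ≠ k → Q k' ∉ segment ℝ (P i) (P (i + 1)))

/-- Area of a polygon: the Lebesgue measure of its convex hull. -/
def area {n : ℕ} (P : Fin n → Pt) : ℝ := (MeasureTheory.volume (hull P)).toReal

/-- `P'` is in the midpoint pockets of `P`. -/
def MidpointPockets {n : ℕ} [NeZero n] (P P' : Fin n → Pt) : Prop :=
  ∀ i : Fin n,
    P' i ∈ convexHull ℝ
      ({midpoint ℝ (P (i - 1)) (P i), P i, midpoint ℝ (P i) (P (i + 1))} : Set Pt) ∧
    P i ∉ segment ℝ (midpoint ℝ (P (i - 1)) (P i)) (midpoint ℝ (P i) (P (i + 1)))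

/-- A row stochastic matrix. -/
def RowStochastic {n : ℕ} (D : Matrix (Fin n) (Fin n) ℝ) : Prop :=
  (∀ i j, 0 ≤ D i j) ∧ ∀ i, ∑ j, D i j = 1

/-- A continuous-time non-homogeneous Markov process of `n` states. -/
def IsMarkovProcess (n : ℕ) (M : ℝ → ℝ → Matrix (Fin n) (Fin n) ℝ) : Prop :=
  ContinuousOn (fun p : ℝ × ℝ => M p.1 p.2) {p : ℝ × ℝ | 0 ≤ p.1 ∧ p.1 ≤ p.2} ∧
  (∀ s t : ℝ, 0 ≤ s → s ≤ t → IsUnit (M s t).det ∧ RowStochastic (M s t)) ∧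
  (∀ r s t : ℝ, 0 ≤ r → r ≤ s → s ≤ t → M r t = M r s * M s t) ∧
  (∀ t : ℝ, 0 ≤ t → M t t = 1)

/-- An embeddable stochastic matrix. -/
def Embeddable {n : ℕ} (D : Matrix (Fin n) (Fin n) ℝ) : Prop :=
  ∃ M : ℝ → ℝ → Matrix (Fin n) (Fin n) ℝ, IsMarkovProcess n M ∧
    ∃ s t : ℝ, 0 ≤ s ∧ s ≤ t ∧ D = M s t

/-- The elementary stochastic matrix `K^{ij}(c)`. -/
def elemStoch {n : ℕ} (i j : Fin n) (c : ℝ) : Matrix (Fin n) (Fin n) ℝ :=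
  1 + c • (Matrix.single i j 1 - Matrix.single i i 1)


open Matrix in
lemma elemStoch_mul_expand {n : ℕ} (i j k l : Fin n) (c d : ℝ) :
    elemStoch k l d * elemStoch i j c =
      1 + c • (single i j (1:ℝ) - single i i 1)
        + d • (single k l (1:ℝ) - single k k 1)
        + (d*c) • ((single k l (1:ℝ) - single k k 1) *
                   (single i j (1:ℝ) - single i i 1)) := by
  simp only [elemStoch, add_mul, mul_add, one_mul, mul_one, smul_mul_assoc, mul_smul_comm,
    smul_smul]
  module

/-- Commutation of elementary stochastic matrices outside the two
exceptional cases. -/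
theorem statement3 (n : ℕ) (hn : 2 ≤ n) (i j k l : Fin n)
    (hij : i ≠ j) (hkl : k ≠ l)
    (h1 : ¬(j = k ∧ i ≠ l)) (h2 : ¬(i = l ∧ j ≠ k)) :
    ∀ c d : ℝ, c ∈ Set.Icc (0 : ℝ) 1 → d ∈ Set.Icc (0 : ℝ) 1 →
      ∃ c' d' : ℝ, c' ∈ Set.Icc (0 : ℝ) 1 ∧ d' ∈ Set.Icc (0 : ℝ) 1 ∧
        elemStoch k l d * elemStoch i j c = elemStoch i j d' * elemStoch k l c' := by
  intro c d hc hd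
  obtain ⟨hc0, hc1⟩ := hc
  obtain ⟨hd0, hd1⟩ := hd
  by_cases hjk : j = k
  · -- j = k, hence i = l
    have hil : i = l := by
      by_contra h; exact h1 ⟨hjk, h⟩
    subst hjk; subst hil
    have hBA : (Matrix.single j i (1:ℝ) - Matrix.single j j 1) *
        (Matrix.single i j 1 - Matrix.single i i 1) =
        -(Matrix.single j i 1 - Matrix.single j j 1) := by
      simp only [sub_mul, mul_sub, Matrix.single_mul_single_same,
        Matrix.single_mul_single_of_ne _ _ _ _ hij.symm, mul_one]
      abel
    have hAB : (Matrix.single i j (1:ℝ) - Matrix.single i i 1) *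
        (Matrix.single j i 1 - Matrix.single j j 1) =
        -(Matrix.single i j 1 - Matrix.single i i 1) := by
      simp only [sub_mul, mul_sub, Matrix.single_mul_single_same,
        Matrix.single_mul_single_of_ne _ _ _ _ hij, mul_one]
      abel
    by_cases ht : d * (1 - c) = 1
    · have hc' : c = 0 := by nlinarith
      have hd' : d = 1 := by nlinarith
      subst hc'; subst hd'
      refine ⟨1, 0, ⟨by norm_num, by norm_num⟩, ⟨by norm_num, by norm_num⟩, ?_⟩
      rw [elemStoch_mul_expand, elemStoch_mul_expand, hBA, hAB]
      module
    · have ht0 : (0:ℝ) < 1 - d * (1 - c) := by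
        rcases lt_or_eq_of_le (show d * (1 - c) ≤ 1 by nlinarith) with h | h
        · linarith
        · exact absurd h ht
      refine ⟨d * (1 - c), c / (1 - d * (1 - c)),
        ⟨by nlinarith, by nlinarith⟩,
        ⟨div_nonneg hc0 ht0.le, by rw [div_le_one ht0]; nlinarith⟩, ?_⟩
      rw [elemStoch_mul_expand, elemStoch_mul_expand, hBA, hAB]
      have hne := ht0.ne'
      match_scalars <;> field_simp <;> ring
  · -- j ≠ k, hence i ≠ l
    have hil : i ≠ l := fun h => h2 ⟨h, hjk⟩
    by_cases hik : i = k
    · subst hik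
      by_cases hjl : j = l
      · subst hjl
        exact ⟨c, d, ⟨hc0, hc1⟩, ⟨hd0, hd1⟩, rfl⟩
      · have hBA : (Matrix.single i l (1:ℝ) - Matrix.single i i 1) *
            (Matrix.single i j 1 - Matrix.single i i 1) =
            -(Matrix.single i j 1 - Matrix.single i i 1) := by
          simp only [sub_mul, mul_sub, Matrix.single_mul_single_same,
            Matrix.single_mul_single_of_ne _ _ _ _ hil.symm, mul_one]
          abel
        have hAB : (Matrix.single i j (1:ℝ) - Matrix.single i i 1) *
            (Matrix.single i l 1 - Matrix.single i i 1) =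
            -(Matrix.single i l 1 - Matrix.single i i 1) := by
          simp only [sub_mul, mul_sub, Matrix.single_mul_single_same,
            Matrix.single_mul_single_of_ne _ _ _ _ hij.symm, mul_one]
          abel
        by_cases ht : c * (1 - d) = 1
        · have hd' : d = 0 := by nlinarith
          have hc' : c = 1 := by nlinarith
          subst hd'; subst hc'
          refine ⟨0, 1, ⟨by norm_num, by norm_num⟩, ⟨by norm_num, by norm_num⟩, ?_⟩
          rw [elemStoch_mul_expand, elemStoch_mul_expand, hBA, hAB]
          module
        · have ht0 : (0:ℝ) < 1 - c * (1 - d) := by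
            rcases lt_or_eq_of_le (show c * (1 - d) ≤ 1 by nlinarith) with h | h
            · linarith
            · exact absurd h ht
          refine ⟨d / (1 - c * (1 - d)), c * (1 - d),
            ⟨div_nonneg hd0 ht0.le, by rw [div_le_one ht0]; nlinarith⟩,
            ⟨by nlinarith, by nlinarith⟩, ?_⟩
          rw [elemStoch_mul_expand, elemStoch_mul_expand, hBA, hAB]
          have hne := ht0.ne'
          match_scalars <;> field_simp <;> ring
    · -- disjoint rows: matrices commute
      have hBA : (Matrix.single k l (1:ℝ) - Matrix.single k k 1) *
          (Matrix.single i j 1 - Matrix.single i i 1) = 0 := by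
        have hik' : ¬ k = i := fun h => hik h.symm
        simp only [sub_mul, mul_sub, Matrix.single_mul_single_of_ne _ _ _ _ hil.symm,
          Matrix.single_mul_single_of_ne _ _ _ _ hik']
        simp
      have hAB : (Matrix.single i j (1:ℝ) - Matrix.single i i 1) *
          (Matrix.single k l 1 - Matrix.single k k 1) = 0 := by
        simp only [sub_mul, mul_sub, Matrix.single_mul_single_of_ne _ _ _ _ hjk,
          Matrix.single_mul_single_of_ne _ _ _ _ hik]
        simp
      refine ⟨d, c, ⟨hd0, hd1⟩, ⟨hc0, hc1⟩, ?_⟩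
      rw [elemStoch_mul_expand, elemStoch_mul_expand, hBA, hAB]
      module

end
end

section
/- For any n-gon P (n ≥ 3), the set D_P of all n-gons degenerately contained in P is a compact subset of (ℝ²)^n. -/
noncomputable section

/-- For any `n`-gon `P` (`n ≥ 3`), the set `D_P` of `n`-gons
degenerately contained in `P` is compact. -/
theorem statement4 (n : ℕ) (hn : 3 ≤ n) (P : Fin n → Pt) :
    IsCompact {P' : Fin n → Pt | DegenIn P' P} := by
  -- For each m, the set of P' that are degenerately contained via an m-gon is
  -- the image of a compact set under a continuous map.
  have key : {P' : Fin n → Pt | DegenIn P' P} =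
      ⋃ m ∈ Finset.range n,
        (fun p : (Fin m → Pt) × (Fin n → Fin m → ℝ) => fun i => ∑ j, p.2 i j • p.1 j) ''
          ((Set.univ.pi fun _ : Fin m => hull P) ×ˢ
            (Set.univ.pi fun _ : Fin n => stdSimplex ℝ (Fin m))) := by
    ext P'
    simp only [Set.mem_setOf_eq, Set.mem_iUnion, Finset.mem_range]
    constructor
    · rintro ⟨m, hm, Q, h1, h2⟩
      refine ⟨m, hm, ?_⟩
      have hQP : ∀ j, Q j ∈ hull P := fun j =>
        h2 (subset_convexHull ℝ _ (Set.mem_range_self j))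
      have hrep : ∀ i : Fin n, ∃ w : Fin m → ℝ,
          w ∈ stdSimplex ℝ (Fin m) ∧ ∑ j, w j • Q j = P' i := by
        intro i
        have hPi : P' i ∈ convexHull ℝ (Set.range Q) :=
          h1 (subset_convexHull ℝ _ (Set.mem_range_self i))
        rw [convexHull_range_eq_exists_affineCombination] at hPi
        obtain ⟨s, w, hw0, hw1, hwa⟩ := hPi
        refine ⟨fun j => if j ∈ s then w j else 0, ⟨?_, ?_⟩, ?_⟩
        · intro j; dsimp only; split
          · exact hw0 _ ‹_›
          · exact le_refl 0
        · simp only [Finset.sum_ite_mem, Finset.univ_inter]; exact hw1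
        · rw [← hwa, Finset.affineCombination_eq_linear_combination s Q w hw1]
          simp only [ite_smul, zero_smul, Finset.sum_ite_mem, Finset.univ_inter]
      choose W hWmem hWeq using hrep
      exact ⟨(Q, W), ⟨fun j _ => hQP j, fun i _ => hWmem i⟩, funext hWeq⟩
    · rintro ⟨m, hm, ⟨Q, W⟩, ⟨hQ, hW⟩, rfl⟩
      refine ⟨m, hm, Q, ?_, ?_⟩
      · apply convexHull_min _ (convex_convexHull ℝ _)
        rintro _ ⟨i, rfl⟩
        exact (convex_convexHull ℝ (Set.range Q)).sum_mem
          (fun j _ => (hW i (Set.mem_univ i)).1 j)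
          (hW i (Set.mem_univ i)).2
          (fun j _ => subset_convexHull ℝ _ (Set.mem_range_self j))
      · apply convexHull_min _ (convex_convexHull ℝ _)
        rintro _ ⟨j, rfl⟩
        exact hQ j (Set.mem_univ j)
  rw [key]
  apply Set.Finite.isCompact_biUnion (Finset.finite_toSet _)
  intro m _
  apply IsCompact.image
  · exact (isCompact_univ_pi fun _ => (Set.finite_range P).isCompact_convexHull (𝕜 := ℝ)).prod
      (isCompact_univ_pi fun _ => isCompact_stdSimplex ℝ (Fin m))
  · exact continuous_pi fun i => continuous_finset_sum _ fun j _ =>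
      Continuous.smul (f := fun a : (Fin m → Pt) × (Fin n → Fin m → ℝ) => a.2 i j) (g := fun a : (Fin m → Pt) × (Fin n → Fin m → ℝ) => a.1 j)
        ((continuous_apply j).comp ((continuous_apply i).comp continuous_snd))
        ((continuous_apply j).comp continuous_fst)

end
end

section
/- Let P be a convex n-gon (oriented counterclockwise) and let P' be an n-gon inscribed in P, non-degenerately contained in P, and such that at least one vertex of P' equals a vertex of P. Then there is a sequence of at most n−1 push-out moves transforming P' into an n-gon P'' whose set of vertices equals the set of vertices of P (every vertex of P is occupied by a vertex of P''). -/
noncomputable section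

open Fin.NatCast Fin.CommRing

lemma seg_helper (A B : Pt) {t' t : ℝ} (h0 : 0 ≤ t') (h1 : t' ≤ t) (h2 : t ≤ 1) (h3 : t' < 1) :
    (1-t) • A + t • B ∈ segment ℝ ((1-t') • A + t' • B) B := by
  set u : ℝ := (1-t)/(1-t') with hu
  have h1t' : (0:ℝ) < 1 - t' := by linarith
  have hA : u * (1-t') = 1 - t := div_mul_cancel₀ _ (by linarith)
  refine ⟨u, 1 - u, ?_, ?_, by ring, ?_⟩
  · apply div_nonneg <;> linarith
  · have : u ≤ 1 := by rw [hu]; exact div_le_one_of_le₀ (by linarith) (by linarith)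
    linarith
  · have hB : u * t' + (1 - u) = t := by nlinarith [hA]
    calc u • ((1-t') • A + t' • B) + (1 - u) • B
        = (u * (1-t')) • A + (u * t' + (1 - u)) • B := by
          rw [smul_add, smul_smul, smul_smul, add_smul]; abel
      _ = (1-t) • A + t • B := by rw [hA, hB]

lemma seg_helper' (A B : Pt) {t' t : ℝ} (h0 : 0 ≤ t') (h1 : t' ≤ t) (h2 : t < 1) :
    (1-t) • A + t • B ∈ segment ℝ ((1-t') • A + t' • B) B :=
  seg_helper A B h0 h1 h2.le (lt_of_le_of_lt h1 h2)

lemma seg_helper0 (A B : Pt) {t : ℝ} (h0 : 0 ≤ t) (h2 : t ≤ 1) :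
    (1-t) • A + t • B ∈ segment ℝ A B := by
  have := seg_helper A B (t' := 0) le_rfl h0 h2 one_pos
  simpa using this

lemma seg_left (C D : Pt) {s : ℝ} (h0 : 0 ≤ s) (h1 : s ≤ 1) :
    (1-s) • C + s • D ∈ segment ℝ D C :=
  ⟨s, 1-s, h0, by linarith, by ring, by abel⟩

/-- Let `P` be a convex `n`-gon and `P'` an `n`-gon inscribed in `P`,
non-degenerate in `P`, with at least one vertex of `P'` occupying a vertex of `P`.
Then at most `n-1` push-out moves transform `P'` into an `n`-gon whose set of
vertices is exactly the set of vertices of `P`. -/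
theorem statement6 (n : ℕ) (hn : 3 ≤ n) [NeZero n] (P P' : Fin n → Pt) (hP : CCW P)
    (hins : ∀ i, P' i ∈ bdry P)
    (hsub : hull P' ⊆ hull P) (hnd : ¬ DegenIn P' P)
    (hocc : ∃ i j : Fin n, P' i = P j) :
    ∃ k : ℕ, k ≤ n - 1 ∧ ∃ P'' : Fin n → Pt,
      Set.range P'' = Set.range P ∧ MoveChain PushOut k P' P'' := by
  classical
  obtain ⟨mm, rfl⟩ : ∃ mm, n = mm + 1 := ⟨n - 1, by omega⟩
  obtain ⟨i0, j0, hP'i0⟩ := hocc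
  have hm2 : 2 ≤ mm := by omega
  -- canonical representation of each vertex of P' on an edge of P
  have hrep : ∀ i : Fin (mm+1), ∃ dt : ℕ × ℝ, dt.1 < mm + 1 ∧ 0 ≤ dt.2 ∧ dt.2 < 1 ∧
      P' i = (1 - dt.2) • P (j0 + ((dt.1 : ℕ) : Fin (mm+1)))
        + dt.2 • P (j0 + ((dt.1 + 1 : ℕ) : Fin (mm+1))) := by
    intro i
    obtain ⟨c, hc⟩ := Set.mem_iUnion.1 (hins i)
    obtain ⟨a, b, ha, hb, hab, heq⟩ := hc
    rcases lt_or_eq_of_le (by linarith : b ≤ 1) with hb1 | hb1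
    · refine ⟨⟨(c - j0).val, b⟩, (c - j0).isLt, hb, hb1, ?_⟩
      have h1 : (((c - j0).val : ℕ) : Fin (mm+1)) = c - j0 := Fin.cast_val_eq_self _
      have h2 : (((c - j0).val + 1 : ℕ) : Fin (mm+1)) = (c - j0) + 1 := by
        rw [Nat.cast_add, Nat.cast_one, h1]
      simp only [h1, h2]
      rw [show j0 + (c - j0) = c by ring, show j0 + (c - j0 + 1) = c + 1 by ring,
        show (1:ℝ) - b = a by linarith]
      exact heq.symm
    · have ha0 : a = 0 := by linarith
      have hP1 : P' i = P (c + 1) := by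
        rw [← heq, ha0, hb1]; simp
      refine ⟨⟨(c + 1 - j0).val, 0⟩, (c + 1 - j0).isLt, le_rfl, one_pos, ?_⟩
      have h1 : (((c + 1 - j0).val : ℕ) : Fin (mm+1)) = c + 1 - j0 := Fin.cast_val_eq_self _
      simp only [h1]
      rw [show j0 + (c + 1 - j0) = c + 1 by ring, hP1]
      simp
  choose dt hdlt ht0 ht1 hPeq using hrep
  set d : Fin (mm+1) → ℕ := fun i => (dt i).1 with hd_def
  set tt : Fin (mm+1) → ℝ := fun i => (dt i).2 with htt_def
  set p : Fin (mm+1) → ℝ := fun i => (d i : ℝ) + tt i with hp_def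
  have hp0 : ∀ i, 0 ≤ p i := fun i => by
    have := ht0 i; simp only [hp_def]; positivity
  have hplt : ∀ i, p i < mm + 1 := fun i => by
    have h1 := hdlt i; have h2 := ht1 i
    have : (d i : ℝ) ≤ mm := by exact_mod_cast Nat.lt_succ_iff.1 h1
    simp only [hp_def]; push_cast; linarith
  -- sorting
  set v : Fin mm → ℝ := fun k => p (i0.succAbove k) with hv_def
  set σ := Tuple.sort v with hσ_def
  set e : Fin mm → Fin (mm+1) := fun k => i0.succAbove (σ k) with he_def
  have he_inj : Function.Injective e := fun a b h =>
    σ.injective (Fin.succAbove_right_injective h)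
  have he_ne : ∀ k, e k ≠ i0 := fun k => Fin.succAbove_ne i0 (σ k)
  have he_surj : ∀ i, i ≠ i0 → ∃ k, e k = i := by
    intro i hi
    obtain ⟨z, hz⟩ := Fin.exists_succAbove_eq hi
    exact ⟨σ.symm z, by simp [he_def, hz]⟩
  have hmono : ∀ a b : Fin mm, a ≤ b → p (e a) ≤ p (e b) := by
    intro a b hab
    exact Tuple.monotone_sort v hab
  have hPmem : ∀ j, P j ∈ hull P := fun j => subset_convexHull ℝ _ ⟨j, rfl⟩
  have hP'hull : ∀ i, P' i ∈ hull P := fun i => hsub (subset_convexHull ℝ _ ⟨i, rfl⟩)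
  -- Condition C, lower bound
  have hC1 : ∀ k : Fin mm, (k.val : ℝ) ≤ p (e k) := by
    intro k
    by_contra hk
    push_neg at hk
    apply hnd
    set Q : Fin mm → Pt :=
      fun l => if l.val ≤ k.val then P (j0 + ((l.val : ℕ) : Fin (mm+1))) else P' (e l) with hQ_def
    refine ⟨mm, by omega, Q, ?_, ?_⟩
    · apply convexHull_min ?_ (convex_convexHull ℝ _)
      rintro x ⟨i, rfl⟩
      by_cases hi : i = i0
      · have : Q ⟨0, by omega⟩ = P j0 := by
          simp only [hQ_def, Fin.val_mk]
          rw [if_pos (Nat.zero_le _)]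
          norm_num
        rw [hi, hP'i0, ← this]
        exact subset_convexHull ℝ _ ⟨_, rfl⟩
      · obtain ⟨l, rfl⟩ := he_surj i hi
        by_cases hl : l.val ≤ k.val
        · have hple : p (e l) < k.val := lt_of_le_of_lt (hmono l k (Fin.le_def.2 hl)) hk
          have hdl : d (e l) + 1 ≤ k.val := by
            have h1 : (d (e l) : ℝ) ≤ p (e l) := by
              have := ht0 (e l); simp only [hp_def]; linarith
            have : (d (e l) : ℝ) < k.val := lt_of_le_of_lt h1 hple
            have : d (e l) < k.val := by exact_mod_cast this
            omega
          have hmem1 : P (j0 + ((d (e l) : ℕ) : Fin (mm+1))) ∈ convexHull ℝ (Set.range Q) := by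
            have hQl : Q ⟨d (e l), by omega⟩ = P (j0 + ((d (e l) : ℕ) : Fin (mm+1))) := by
              simp only [hQ_def, if_pos (by omega : d (e l) ≤ k.val)]
            rw [← hQl]; exact subset_convexHull ℝ _ ⟨_, rfl⟩
          have hmem2 : P (j0 + ((d (e l) + 1 : ℕ) : Fin (mm+1))) ∈ convexHull ℝ (Set.range Q) := by
            have hQl : Q ⟨d (e l) + 1, by omega⟩ = P (j0 + ((d (e l) + 1 : ℕ) : Fin (mm+1))) := by
              simp only [hQ_def, if_pos (by omega : d (e l) + 1 ≤ k.val)]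
            rw [← hQl]; exact subset_convexHull ℝ _ ⟨_, rfl⟩
          rw [hPeq (e l)]
          exact (convex_convexHull ℝ _) hmem1 hmem2 (by have := ht1 (e l); linarith)
            (ht0 (e l)) (by ring)
        · have : Q l = P' (e l) := by simp only [hQ_def, if_neg hl]
          rw [← this]; exact subset_convexHull ℝ _ ⟨_, rfl⟩
    · apply convexHull_min ?_ (convex_convexHull ℝ _)
      rintro x ⟨l, rfl⟩
      by_cases hl : l.val ≤ k.val
      · simp only [hQ_def, if_pos hl]; exact hPmem _
      · simp only [hQ_def, if_neg hl]; exact hP'hull _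
  -- Condition C, upper bound
  have hC2 : ∀ k : Fin mm, p (e k) ≤ (k.val : ℝ) + 2 := by
    intro k
    by_contra hk
    push_neg at hk
    have hkm : k.val + 2 ≤ mm := by
      have h1 := hplt (e k)
      have : (k.val : ℝ) + 2 < mm + 1 := lt_trans hk h1
      have : k.val + 2 < mm + 1 := by exact_mod_cast this
      omega
    apply hnd
    set Q : Fin mm → Pt :=
      fun l => if l.val < k.val then P' (e l) else P (j0 + ((l.val + 2 : ℕ) : Fin (mm+1))) with hQ_def
    have hdl : ∀ l : Fin mm, k.val ≤ l.val → k.val + 2 ≤ d (e l) ∧ d (e l) ≤ mm := by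
      intro l hl
      have hple : (k.val : ℝ) + 2 < p (e l) := lt_of_lt_of_le hk (hmono k l (Fin.le_def.2 hl))
      have h1 : p (e l) < d (e l) + 1 := by
        have := ht1 (e l); simp only [hp_def]; linarith
      have : (k.val : ℝ) + 2 < d (e l) + 1 := lt_trans hple h1
      have h2 : k.val + 2 < d (e l) + 1 := by exact_mod_cast this
      exact ⟨by omega, Nat.lt_succ_iff.1 (hdlt (e l))⟩
    refine ⟨mm, by omega, Q, ?_, ?_⟩
    · apply convexHull_min ?_ (convex_convexHull ℝ _)
      rintro x ⟨i, rfl⟩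
      by_cases hi : i = i0
      · have hQm : Q ⟨mm - 1, by omega⟩ = P j0 := by
          have h1 : ¬ (mm - 1 < k.val) := by omega
          have h2 : ((mm - 1 + 2 : ℕ) : Fin (mm+1)) = 0 := by
            rw [show mm - 1 + 2 = mm + 1 by omega]; exact Fin.natCast_self _
          simp only [hQ_def, if_neg h1, h2, add_zero]
        rw [hi, hP'i0, ← hQm]
        exact subset_convexHull ℝ _ ⟨_, rfl⟩
      · obtain ⟨l, rfl⟩ := he_surj i hi
        by_cases hl : l.val < k.val
        · have : Q l = P' (e l) := by simp only [hQ_def, if_pos hl]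
          rw [← this]; exact subset_convexHull ℝ _ ⟨_, rfl⟩
        · obtain ⟨hd1, hd2⟩ := hdl l (by omega)
          have hmem1 : P (j0 + ((d (e l) : ℕ) : Fin (mm+1))) ∈ convexHull ℝ (Set.range Q) := by
            have hQl : Q ⟨d (e l) - 2, by omega⟩ = P (j0 + ((d (e l) : ℕ) : Fin (mm+1))) := by
              have hcond : ¬ (d (e l) - 2 < k.val) := by omega
              simp only [hQ_def, Fin.val_mk]
              rw [if_neg hcond, show d (e l) - 2 + 2 = d (e l) from by omega]
            rw [← hQl]; exact subset_convexHull ℝ _ ⟨_, rfl⟩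
          have hmem2 : P (j0 + ((d (e l) + 1 : ℕ) : Fin (mm+1))) ∈ convexHull ℝ (Set.range Q) := by
            have hQl : Q ⟨d (e l) - 1, by omega⟩ = P (j0 + ((d (e l) + 1 : ℕ) : Fin (mm+1))) := by
              have hcond : ¬ (d (e l) - 1 < k.val) := by omega
              simp only [hQ_def, Fin.val_mk]
              rw [if_neg hcond, show d (e l) - 1 + 2 = d (e l) + 1 from by omega]
            rw [← hQl]; exact subset_convexHull ℝ _ ⟨_, rfl⟩
          rw [hPeq (e l)]
          exact (convex_convexHull ℝ _) hmem1 hmem2 (by have := ht1 (e l); linarith)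
            (ht0 (e l)) (by ring)
    · apply convexHull_min ?_ (convex_convexHull ℝ _)
      rintro x ⟨l, rfl⟩
      by_cases hl : l.val < k.val
      · simp only [hQ_def, if_pos hl]; exact hP'hull _
      · simp only [hQ_def, if_neg hl]; exact hPmem _
  have hPeqd : ∀ i, P' i = (1 - tt i) • P (j0 + ((d i : ℕ) : Fin (mm+1)))
      + tt i • P (j0 + ((d i + 1 : ℕ) : Fin (mm+1))) := hPeq
  have htt0 : ∀ i, 0 ≤ tt i := ht0
  have htt1 : ∀ i, tt i < 1 := ht1
  -- classification of points into right-movers and others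
  set R : Fin mm → Prop := fun k => p (e k) < k.val + 1 with hR_def
  set r : ℕ := (Finset.univ.filter R).card with hr_def
  set time : Fin mm → ℕ := fun k =>
    if R k then (Finset.univ.filter (fun k' => R k' ∧ k' < k)).card
    else r + (Finset.univ.filter (fun k' => ¬ R k' ∧ k < k')).card with htime_def
  have hrm : r ≤ mm := by
    rw [hr_def]
    exact le_trans (Finset.card_filter_le _ _) (by simp)
  have htR : ∀ k, R k → time k < r := by
    intro k hk
    have hsub : Finset.univ.filter (fun k' => R k' ∧ k' < k) ⊆ Finset.univ.filter R := by
      intro x hx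
      simp only [Finset.mem_filter, Finset.mem_univ, true_and] at hx ⊢
      exact hx.1
    have hlt := Finset.card_lt_card ((Finset.ssubset_iff_of_subset hsub).2
      ⟨k, by simp [hk], by simp⟩)
    simpa [htime_def, if_pos hk, hr_def] using hlt
  have htNR : ∀ k, ¬ R k → r ≤ time k := by
    intro k hk
    simp only [htime_def, if_neg hk]
    exact Nat.le_add_right _ _
  have htmm : ∀ k, time k < mm := by
    intro k
    by_cases hk : R k
    · exact lt_of_lt_of_le (htR k hk) hrm
    · have hsub : Finset.univ.filter (fun k' => ¬ R k' ∧ k < k') ⊆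
          Finset.univ.filter (fun k' => ¬ R k') := by
        intro x hx
        simp only [Finset.mem_filter, Finset.mem_univ, true_and] at hx ⊢
        exact hx.1
      have hlt := Finset.card_lt_card ((Finset.ssubset_iff_of_subset hsub).2
        ⟨k, by simp [hk], by simp⟩)
      have hsplit : r + (Finset.univ.filter (fun k' => ¬ R k')).card = mm := by
        rw [hr_def]
        have := Finset.card_filter_add_card_filter_not (s := Finset.univ) (p := R)
        simpa using this
      simp only [htime_def, if_neg hk]
      omega
  have htlt_RR : ∀ a b : Fin mm, R a → R b → a < b → time a < time b := by
    intro a b ha hb hab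
    have hsub : Finset.univ.filter (fun k' => R k' ∧ k' < a) ⊆
        Finset.univ.filter (fun k' => R k' ∧ k' < b) := by
      intro x hx
      simp only [Finset.mem_filter, Finset.mem_univ, true_and] at hx ⊢
      exact ⟨hx.1, hx.2.trans hab⟩
    have hlt := Finset.card_lt_card ((Finset.ssubset_iff_of_subset hsub).2
      ⟨a, by simp [ha, hab], by simp⟩)
    simpa [htime_def, if_pos ha, if_pos hb] using hlt
  have htlt_NN : ∀ a b : Fin mm, ¬ R a → ¬ R b → a < b → time b < time a := by
    intro a b ha hb hab
    have hsub : Finset.univ.filter (fun k' => ¬ R k' ∧ b < k') ⊆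
        Finset.univ.filter (fun k' => ¬ R k' ∧ a < k') := by
      intro x hx
      simp only [Finset.mem_filter, Finset.mem_univ, true_and] at hx ⊢
      exact ⟨hx.1, hab.trans hx.2⟩
    have hlt := Finset.card_lt_card ((Finset.ssubset_iff_of_subset hsub).2
      ⟨b, by simp [hb, hab], by simp⟩)
    simp only [htime_def, if_neg ha, if_neg hb]
    omega
  have hkey : ∀ a b : Fin mm, a < b → time a ≠ time b := by
    intro a b h
    by_cases ha : R a <;> by_cases hb : R b
    · exact (htlt_RR a b ha hb h).ne
    · exact (lt_of_lt_of_le (htR a ha) (htNR b hb)).ne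
    · exact (lt_of_lt_of_le (htR b hb) (htNR a ha)).ne'
    · exact (htlt_NN a b ha hb h).ne'
  have htinj : ∀ a b : Fin mm, time a = time b → a = b := by
    intro a b hab
    rcases lt_trichotomy a b with h | h | h
    · exact absurd hab (hkey a b h)
    · exact h
    · exact absurd hab.symm (hkey b a h)
  have hsurj : ∀ s : Fin mm, ∃ k, time k = s.val := by
    have hbij : Function.Bijective (fun k : Fin mm => (⟨time k, htmm k⟩ : Fin mm)) :=
      Finite.injective_iff_bijective.1 (fun a b hab => htinj a b (congrArg Fin.val hab))
    intro s
    obtain ⟨k, hk⟩ := hbij.2 s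
    exact ⟨k, congrArg Fin.val hk⟩
  -- geometric facts per class
  have hRd : ∀ k : Fin mm, R k → d (e k) = k.val := by
    intro k hk
    have h1 := hC1 k
    have h2 : p (e k) < k.val + 1 := hk
    have h3 := htt0 (e k)
    have h4 := htt1 (e k)
    have hp' : p (e k) = (d (e k) : ℝ) + tt (e k) := rfl
    rw [hp'] at h1 h2
    have hlow : (d (e k) : ℝ) < k.val + 1 := by linarith
    have hhigh : (k.val : ℝ) < (d (e k) : ℝ) + 1 := by linarith
    have hlow' : d (e k) < k.val + 1 := by exact_mod_cast hlow
    have hhigh' : k.val < d (e k) + 1 := by exact_mod_cast hhigh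
    omega
  have hNRseg : ∀ k : Fin mm, ¬ R k → ∃ sc : ℝ, 0 ≤ sc ∧ sc ≤ 1 ∧
      P' (e k) = (1 - sc) • P (j0 + ((k.val + 1 : ℕ) : Fin (mm+1)))
        + sc • P (j0 + ((k.val + 2 : ℕ) : Fin (mm+1))) := by
    intro k hk
    have h1 : (k.val : ℝ) + 1 ≤ p (e k) := not_lt.1 hk
    have h2 := hC2 k
    have h3 := htt0 (e k)
    have h4 := htt1 (e k)
    have hp' : p (e k) = (d (e k) : ℝ) + tt (e k) := rfl
    rw [hp'] at h1 h2
    have hdlow : k.val + 1 ≤ d (e k) := by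
      have hr1 : (k.val : ℝ) < d (e k) := by linarith
      have : k.val < d (e k) := by exact_mod_cast hr1
      omega
    have hdhigh : d (e k) ≤ k.val + 2 := by
      have hr1 : (d (e k) : ℝ) ≤ (k.val : ℝ) + 2 := by linarith
      exact_mod_cast hr1
    rcases eq_or_lt_of_le hdlow with hdeq | hdlt2
    · refine ⟨tt (e k), h3, h4.le, ?_⟩
      rw [hPeqd (e k), ← hdeq, show k.val + 1 + 1 = k.val + 2 from by omega]
    · have hdeq : d (e k) = k.val + 2 := by omega
      have htt0 : tt (e k) = 0 := by
        rw [hdeq] at h2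
        push_cast at h2
        linarith
      rw [hPeqd (e k), htt0, hdeq]
      exact ⟨1, zero_le_one, le_rfl, by simp⟩
  have hadj : ∀ k km : Fin mm, km.val = k.val - 1 → 0 < k.val → R k → ¬ R km →
      d (e km) = k.val ∧ tt (e km) ≤ tt (e k) := by
    intro k km hkmv hk0 hk hnk
    have hle : km ≤ k := Fin.le_def.2 (by omega)
    have h1 : (km.val : ℝ) + 1 ≤ p (e km) := not_lt.1 hnk
    have h2 : p (e km) ≤ p (e k) := hmono km k hle
    have h3 : p (e k) < k.val + 1 := hk
    have hkmr : (km.val : ℝ) + 1 = k.val := by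
      have : km.val + 1 = k.val := by omega
      exact_mod_cast this
    have hpkm : p (e km) = (d (e km) : ℝ) + tt (e km) := rfl
    have hpk : p (e k) = (d (e k) : ℝ) + tt (e k) := rfl
    have hdk := hRd k hk
    rw [hpkm] at h1 h2
    rw [hpk] at h2 h3
    have ht0m := htt0 (e km)
    have ht1m := htt1 (e km)
    have ht0k := htt0 (e k)
    have hd1 : (d (e km) : ℝ) < k.val + 1 := by linarith
    have hd2 : (k.val : ℝ) < (d (e km) : ℝ) + 1 := by linarith
    have hd1' : d (e km) < k.val + 1 := by exact_mod_cast hd1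
    have hd2' : k.val < d (e km) + 1 := by exact_mod_cast hd2
    have hdkm : d (e km) = k.val := by omega
    refine ⟨hdkm, ?_⟩
    rw [hdkm, hdk] at h2
    linarith
  -- the moving polygons
  set tgt : Fin mm → Fin (mm+1) := fun k => j0 + ((k.val + 1 : ℕ) : Fin (mm+1)) with htgt_def
  set W : ℕ → Fin (mm+1) → Pt := fun s i =>
    if h : ∃ k, e k = i ∧ time k < s then P (tgt h.choose) else P' i with hW_def
  have hWe : ∀ (s : ℕ) (k : Fin mm), W s (e k) = if time k < s then P (tgt k) else P' (e k) := by
    intro s k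
    by_cases h : time k < s
    · have hex : ∃ k', e k' = e k ∧ time k' < s := ⟨k, rfl, h⟩
      have hch := hex.choose_spec
      simp only [hW_def, dif_pos hex, if_pos h]
      rw [he_inj hch.1]
    · have hex : ¬ ∃ k', e k' = e k ∧ time k' < s := by
        rintro ⟨k', hk', hlt⟩
        exact h (he_inj hk' ▸ hlt)
      simp only [hW_def, dif_neg hex, if_neg h]
  have hWi0 : ∀ s, W s i0 = P' i0 := by
    intro s
    have hex : ¬ ∃ k, e k = i0 ∧ time k < s := by
      rintro ⟨k, hk, -⟩
      exact he_ne k hk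
    simp only [hW_def, dif_neg hex]
  -- each step is a push-out move
  have hstep : ∀ s : ℕ, s < mm → PushOut (W s) (W (s+1)) := by
    intro s hs
    obtain ⟨k, hks⟩ := hsurj ⟨s, hs⟩
    have hks' : time k = s := hks
    have hframe : ∀ l, l ≠ e k → W (s+1) l = W s l := by
      intro l hl
      by_cases hli : l = i0
      · rw [hli, hWi0, hWi0]
      · obtain ⟨k', rfl⟩ := he_surj l hli
        have hkk : k' ≠ k := fun h => hl (congrArg e h)
        have hts : time k' ≠ s := fun h => hkk (htinj _ _ (h.trans hks'.symm))
        rw [hWe (s+1) k', hWe s k']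
        by_cases h : time k' < s
        · rw [if_pos h, if_pos (by omega)]
        · rw [if_neg h, if_neg (by omega)]
    have hWk : W s (e k) = P' (e k) := by rw [hWe s k, if_neg (by omega)]
    have hWk1 : W (s+1) (e k) = P (tgt k) := by rw [hWe (s+1) k, if_pos (by omega)]
    by_cases hRk : R k
    · have hdk := hRd k hRk
      rcases Nat.eq_zero_or_pos k.val with hk0 | hk0
      · refine ⟨e k, i0, he_ne k, ?_, hframe⟩
        rw [hWk, hWk1, hWi0, hP'i0, hPeqd (e k), hdk, hk0]
        have htg : tgt k = j0 + ((0 + 1 : ℕ) : Fin (mm+1)) := by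
          simp only [htgt_def, hk0]
        rw [htg, show P j0 = P (j0 + ((0:ℕ) : Fin (mm+1))) from by norm_num]
        exact seg_helper0 _ _ (htt0 _) (htt1 _).le
      · set km : Fin mm := ⟨k.val - 1, by omega⟩ with hkm_def
        have hkmv : km.val = k.val - 1 := rfl
        have hkne : k ≠ km := by
          intro h
          have := congrArg Fin.val h
          rw [hkmv] at this
          omega
        by_cases hRkm : R km
        · have hlt : time km < s := by
            have := htlt_RR km k hRkm hRk (Fin.lt_def.2 (by omega))
            omega
          refine ⟨e k, e km, fun h => hkne (he_inj h), ?_, hframe⟩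
          rw [hWk, hWk1, hWe s km, if_pos hlt, hPeqd (e k), hdk]
          have htgkm : tgt km = j0 + ((k.val : ℕ) : Fin (mm+1)) := by
            simp only [htgt_def, hkm_def, Fin.val_mk]
            rw [show k.val - 1 + 1 = k.val from by omega]
          rw [htgkm]
          simp only [htgt_def]
          exact seg_helper0 _ _ (htt0 _) (htt1 _).le
        · have hge : r ≤ time km := htNR km hRkm
          have hltr : time k < r := htR k hRk
          obtain ⟨hdkm, httle⟩ := hadj k km hkmv hk0 hRk hRkm
          refine ⟨e k, e km, fun h => hkne (he_inj h), ?_, hframe⟩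
          rw [hWk, hWk1, hWe s km, if_neg (by omega), hPeqd (e k), hPeqd (e km), hdk, hdkm]
          simp only [htgt_def]
          exact seg_helper' _ _ (htt0 _) httle (htt1 _)
    · obtain ⟨sc, hs0, hs1, hseq⟩ := hNRseg k hRk
      by_cases hkm : k.val + 1 < mm
      · set kp : Fin mm := ⟨k.val + 1, hkm⟩ with hkp_def
        have hkpv : kp.val = k.val + 1 := rfl
        have hkne : k ≠ kp := by
          intro h
          have := congrArg Fin.val h
          rw [hkpv] at this
          omega
        have hmoved : time kp < s := by
          by_cases hRkp : R kp
          · have := lt_of_lt_of_le (htR kp hRkp) (htNR k hRk)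
            omega
          · have := htlt_NN k kp hRk hRkp (Fin.lt_def.2 (by omega))
            omega
        refine ⟨e k, e kp, fun h => hkne (he_inj h), ?_, hframe⟩
        rw [hWk, hWk1, hWe s kp, if_pos hmoved, hseq]
        have htgkp : tgt kp = j0 + ((k.val + 2 : ℕ) : Fin (mm+1)) := by
          simp only [htgt_def, hkp_def, Fin.val_mk]
          try rw [show k.val + 1 + 1 = k.val + 2 from by omega]
        rw [htgkp]
        simp only [htgt_def]
        exact seg_left _ _ hs0 hs1
      · have hkmm : k.val = mm - 1 := by
          have := k.isLt
          omega
        refine ⟨e k, i0, he_ne k, ?_, hframe⟩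
        rw [hWk, hWk1, hWi0, hP'i0, hseq]
        have hc0 : ((k.val + 2 : ℕ) : Fin (mm+1)) = 0 := by
          rw [show k.val + 2 = mm + 1 from by omega]
          exact Fin.natCast_self _
        have hPj0 : P (j0 + ((k.val + 2 : ℕ) : Fin (mm+1))) = P j0 := by rw [hc0, add_zero]
        rw [← hPj0]
        simp only [htgt_def]
        exact seg_left _ _ hs0 hs1
  -- assemble the chain
  refine ⟨mm, by omega, W mm, ?_, ?_⟩
  · apply Set.eq_of_subset_of_subset
    · rintro x ⟨i, rfl⟩
      by_cases hi : i = i0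
      · rw [hi, hWi0, hP'i0]
        exact ⟨j0, rfl⟩
      · obtain ⟨k, rfl⟩ := he_surj i hi
        rw [hWe mm k, if_pos (htmm k)]
        exact ⟨tgt k, rfl⟩
    · rintro x ⟨jj, rfl⟩
      by_cases hj : jj = j0
      · exact ⟨i0, by rw [hWi0, hP'i0, hj]⟩
      · have hsub0 : jj - j0 ≠ 0 := sub_ne_zero.2 hj
        have hval : 1 ≤ (jj - j0).val := by
          rcases Nat.eq_zero_or_pos (jj - j0).val with h | h
          · exact absurd (Fin.ext (by simp [h]) : jj - j0 = 0) hsub0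
          · omega
        have hlt1 : (jj - j0).val - 1 < mm := by
          have := (jj - j0).isLt
          omega
        refine ⟨e ⟨(jj - j0).val - 1, hlt1⟩, ?_⟩
        rw [hWe mm _, if_pos (htmm _)]
        have htg : tgt ⟨(jj - j0).val - 1, hlt1⟩ = jj := by
          simp only [htgt_def, Fin.val_mk]
          rw [show (jj - j0).val - 1 + 1 = (jj - j0).val from by omega, Fin.cast_val_eq_self]
          ring
        rw [htg]
  · refine ⟨fun s => W s.val, ?_, ?_, ?_⟩
    · funext i
      have hex : ¬ ∃ k, e k = i ∧ time k < ((0 : Fin (mm+1)) : ℕ) := by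
        rintro ⟨k, -, h⟩
        simp at h
      simp only [hW_def, dif_neg hex]
    · rfl
    · intro s
      exact hstep s.val s.isLt


end
end

section
/- Let P = (p_1,…,p_n) and P' = (p_1',…,p_n') be n-gons such that every vertex of P' equals some vertex of P, and such that P has a double point (there exist indices i ≠ j with p_i = p_j). Then there is a sequence of at most 3n/2 push-out moves transforming P' into P (i.e., ending at the n-gon whose i-th vertex is p_i for every i). -/
noncomputable section

/-- apply one copy move: vertex `m.1` takes the current value of vertex `m.2`. -/
def stepc {n : ℕ} (C : Fin n → Pt) (m : Fin n × Fin n) : Fin n → Pt :=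
  Function.update C m.1 (C m.2)

def applyc {n : ℕ} (L : List (Fin n × Fin n)) (C : Fin n → Pt) : Fin n → Pt :=
  L.foldl stepc C

lemma applyc_nil {n : ℕ} (C : Fin n → Pt) : applyc [] C = C := rfl

lemma applyc_cons {n : ℕ} (m : Fin n × Fin n) (L : List (Fin n × Fin n)) (C : Fin n → Pt) :
    applyc (m :: L) C = applyc L (stepc C m) := rfl

lemma applyc_append {n : ℕ} (L₁ L₂ : List (Fin n × Fin n)) (C : Fin n → Pt) :
    applyc (L₁ ++ L₂) C = applyc L₂ (applyc L₁ C) := List.foldl_append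

lemma stepc_fst {n : ℕ} (C : Fin n → Pt) (m : Fin n × Fin n) :
    stepc C m m.1 = C m.2 := Function.update_self _ _ _

lemma stepc_other {n : ℕ} (C : Fin n → Pt) (m : Fin n × Fin n) (k : Fin n) (hk : k ≠ m.1) :
    stepc C m k = C k := Function.update_of_ne hk _ _

lemma pushOut_stepc {n : ℕ} (C : Fin n → Pt) (m : Fin n × Fin n) (hm : m.1 ≠ m.2) :
    PushOut (stepc C m) C := by
  refine ⟨m.1, m.2, hm, ?_, ?_⟩
  · rw [stepc_fst, stepc_other C m m.2 hm.symm]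
    exact left_mem_segment ℝ _ _
  · intro k hk; exact (stepc_other C m k hk).symm

lemma moveChain_of_applyc {n : ℕ} (L : List (Fin n × Fin n))
    (hL : ∀ m ∈ L, m.1 ≠ m.2) (C : Fin n → Pt) :
    MoveChain PushOut L.length (applyc L C) C := by
  refine ⟨fun s => applyc (L.take (L.length - s.val)) C, ?_, ?_, ?_⟩
  · simp [applyc]
  · simp [applyc]
  · intro s
    have hs : s.val < L.length := s.isLt
    have h1 : L.length - (s.castSucc).val = (L.length - s.val - 1) + 1 := by
      simp only [Fin.coe_castSucc]; omega
    have h2 : L.length - (s.succ).val = L.length - s.val - 1 := by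
      simp only [Fin.val_succ]; omega
    set u := L.length - s.val - 1 with hu
    have hulen : u < L.length := by omega
    simp only []
    show PushOut (applyc (L.take (L.length - (s.castSucc).val)) C) (applyc (L.take (L.length - (s.succ).val)) C)
    rw [h1, h2]
    have htake : L.take (u + 1) = L.take u ++ [L.get ⟨u, hulen⟩] := by
      rw [← List.take_concat_get hulen, List.concat_eq_append]; rfl
    rw [htake, applyc_append]
    exact pushOut_stepc _ _ (hL _ (L.get_mem ⟨u, hulen⟩))


lemma cycle_moves {n : ℕ} (P P' : Fin n → Pt) (g : Fin n → Fin n) (x0 : Fin n)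
    (hg : ∀ i, P' i = P (g i))
    (C : Fin n → Pt) (ℓ : ℕ) [NeZero ℓ] (hℓ : 2 ≤ ℓ) (σ : Fin ℓ → Fin n)
    (hinj : Function.Injective σ) (hx0 : ∀ t, σ t ≠ x0)
    (hC : ∀ t, C (σ t) = P (σ t)) (hcyc : ∀ t, g (σ t) = σ (t + 1)) :
    ∃ L : List (Fin n × Fin n), (∀ m ∈ L, m.1 ≠ m.2) ∧ L.length = ℓ + 1 ∧
      (∀ t, applyc L C (σ t) = P' (σ t)) ∧ applyc L C x0 = P (σ 0) ∧
      (∀ i, (∀ t, i ≠ σ t) → i ≠ x0 → applyc L C i = C i) := by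
  have hone : (1 : Fin ℓ).val = 1 := by
    rw [Fin.val_one']
    exact Nat.mod_eq_of_lt (by omega)
  have hadd : ∀ t : Fin ℓ, ((t + 1 : Fin ℓ)).val = (t.val + 1) % ℓ := by
    intro t; rw [Fin.val_add, hone]
  set mv : Fin ℓ → Fin n × Fin n :=
    fun t => (σ t, if h : t.val + 1 < ℓ then σ ⟨t.val + 1, h⟩ else x0) with hmv
  set rest : List (Fin n × Fin n) := List.ofFn mv with hrest
  have hrestlen : rest.length = ℓ := by simp [hrest]
  set C₁ : Fin n → Pt := stepc C (x0, σ 0) with hC₁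
  have hC₁x0 : C₁ x0 = P (σ 0) := by
    rw [hC₁]
    have := stepc_fst C (x0, σ 0)
    simpa using this.trans (hC 0)
  have hC₁σ : ∀ t, C₁ (σ t) = P (σ t) := by
    intro t
    rw [hC₁, stepc_other C _ _ (hx0 t), hC t]
  have hC₁other : ∀ i, i ≠ x0 → C₁ i = C i := by
    intro i hi; rw [hC₁, stepc_other C _ _ hi]
  have main : ∀ k, k ≤ ℓ →
      (∀ t : Fin ℓ, t.val < k → applyc (rest.take k) C₁ (σ t) = P' (σ t)) ∧
      (∀ t : Fin ℓ, k ≤ t.val → applyc (rest.take k) C₁ (σ t) = P (σ t)) ∧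
      applyc (rest.take k) C₁ x0 = P (σ 0) ∧
      (∀ i, (∀ t, i ≠ σ t) → i ≠ x0 → applyc (rest.take k) C₁ i = C i) := by
    intro k
    induction k with
    | zero =>
      intro _
      refine ⟨fun t ht => absurd ht (by omega), fun t _ => ?_, ?_, fun i hi hix => ?_⟩
      · simpa [applyc] using hC₁σ t
      · simpa [applyc] using hC₁x0
      · simpa [applyc] using hC₁other i hix
    | succ k ih =>
      intro hk1
      have hkl : k < ℓ := by omega
      obtain ⟨ih1, ih2, ih3, ih4⟩ := ih (by omega)
      have hklen : k < rest.length := by omega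
      have htake : rest.take (k + 1) = rest.take k ++ [mv ⟨k, hkl⟩] := by
        rw [← List.take_concat_get hklen, List.concat_eq_append]
        congr 1
        simp [hrest]
      rw [htake]
      set D := applyc (rest.take k) C₁ with hD
      have happ : applyc (rest.take k ++ [mv ⟨k, hkl⟩]) C₁ = stepc D (mv ⟨k, hkl⟩) := by
        rw [applyc_append]; rfl
      rw [happ]
      have hfst : (mv ⟨k, hkl⟩).1 = σ ⟨k, hkl⟩ := rfl
      -- the value copied in at step k is P' (σ ⟨k, hkl⟩)
      have hval : D (mv ⟨k, hkl⟩).2 = P' (σ ⟨k, hkl⟩) := by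
        by_cases h : k + 1 < ℓ
        · have h2 : (mv ⟨k, hkl⟩).2 = σ ⟨k + 1, h⟩ := by simp [hmv, h]
          rw [h2, ih2 ⟨k + 1, h⟩ (by simp)]
          have : (⟨k, hkl⟩ + 1 : Fin ℓ) = ⟨k + 1, h⟩ := by
            apply Fin.ext; rw [hadd]
            show (k + 1) % ℓ = k + 1
            exact Nat.mod_eq_of_lt h
          rw [← this, ← hcyc ⟨k, hkl⟩, ← hg]
        · have h2 : (mv ⟨k, hkl⟩).2 = x0 := by simp [hmv, h]
          rw [h2, ih3]
          have : (⟨k, hkl⟩ + 1 : Fin ℓ) = (0 : Fin ℓ) := by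
            apply Fin.ext; rw [hadd, Fin.val_zero]
            show (k + 1) % ℓ = 0
            have : k + 1 = ℓ := by omega
            rw [this, Nat.mod_self]
          rw [← this, ← hcyc ⟨k, hkl⟩, ← hg]
      refine ⟨?_, ?_, ?_, ?_⟩
      · intro t ht
        by_cases h : t = ⟨k, hkl⟩
        · rw [h, show σ (⟨k, hkl⟩ : Fin ℓ) = (mv ⟨k, hkl⟩).1 from rfl, stepc_fst, hval, ← h]
        · have hne : σ t ≠ (mv ⟨k, hkl⟩).1 := by
            rw [hfst]; exact fun hc => h (hinj hc)
          rw [stepc_other _ _ _ hne]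
          have htk : t.val < k := by
            rcases Nat.lt_succ_iff_lt_or_eq.mp ht with h' | h'
            · exact h'
            · exact absurd (Fin.ext h') h
          exact ih1 t htk
      · intro t ht
        have hne : σ t ≠ (mv ⟨k, hkl⟩).1 := by
          rw [hfst]; intro hc
          have h2 := congrArg Fin.val (hinj hc)
          simp only [Fin.mk_val] at h2
          omega
        rw [stepc_other _ _ _ hne]
        exact ih2 t (by omega)
      · rw [stepc_other _ _ _ (by rw [hfst]; exact (hx0 ⟨k, hkl⟩).symm)]
        exact ih3
      · intro i hi hix
        rw [stepc_other _ _ _ (by rw [hfst]; exact hi ⟨k, hkl⟩)]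
        exact ih4 i hi hix
  obtain ⟨m1, m2, m3, m4⟩ := main ℓ le_rfl
  have htakeall : rest.take ℓ = rest := by
    rw [← hrestlen]; exact List.take_length
  rw [htakeall] at m1 m2 m3 m4
  refine ⟨(x0, σ 0) :: rest, ?_, ?_, ?_, ?_, ?_⟩
  · intro m hm
    rcases List.mem_cons.mp hm with h | h
    · subst h; exact (hx0 0).symm
    · obtain ⟨t, ht⟩ := List.mem_ofFn.mp (by rw [hrest] at h; exact h)
      subst ht
      by_cases h2 : t.val + 1 < ℓ
      · simp only [hmv, h2, dif_pos]
        intro hc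
        have := hinj hc
        have := congrArg Fin.val this
        simp at this
      · simp only [hmv, h2, dif_neg, not_false_iff]
        exact hx0 t
  · simp [hrestlen]
  · intro t; rw [applyc_cons]; exact m1 t t.isLt
  · rw [applyc_cons]; exact m3
  · intro i hi hix; rw [applyc_cons]; exact m4 i hi hix


lemma closed_of_nopred {n : ℕ} (g : Fin n → Fin n) (U : Finset (Fin n))
    (h : ∀ u ∈ U, ∃ v ∈ U, g v = u) : ∀ u ∈ U, g u ∈ U := by
  classical
  have h1 : U ⊆ U.image g := by
    intro u hu
    obtain ⟨v, hv, hvg⟩ := h u hu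
    exact Finset.mem_image.mpr ⟨v, hv, hvg⟩
  have h2 : U = U.image g :=
    Finset.eq_of_subset_of_card_le h1 (Finset.card_image_le)
  intro u hu
  rw [h2]
  exact Finset.mem_image_of_mem g hu

lemma exists_cycle {n : ℕ} (g : Fin n → Fin n) (S : Finset (Fin n)) (hne : S.Nonempty)
    (hcl : ∀ s ∈ S, g s ∈ S) :
    ∃ (ℓ : ℕ) (hℓ : 0 < ℓ) (σ : Fin ℓ → Fin n), Function.Injective σ ∧
      (∀ t, σ t ∈ S) ∧ ∀ t : Fin ℓ, g (σ t) = σ ⟨(t.val + 1) % ℓ, Nat.mod_lt _ hℓ⟩ := by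
  classical
  obtain ⟨s₀, hs₀⟩ := hne
  set u : ℕ → Fin n := fun k => g^[k] s₀ with hu
  have husucc : ∀ k, u (k + 1) = g (u k) := fun k => Function.iterate_succ_apply' g k s₀
  have huS : ∀ k, u k ∈ S := by
    intro k
    induction k with
    | zero => simpa [hu] using hs₀
    | succ k ih => rw [husucc]; exact hcl _ ih
  have hJ : ∃ j, 0 < j ∧ ∃ i, i < j ∧ u i = u j := by
    obtain ⟨a, b, hab, he⟩ := Finite.exists_ne_map_eq_of_infinite u
    rcases Nat.lt_or_ge a b with h | h
    · exact ⟨b, by omega, a, h, he⟩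
    · have h' : b < a := by omega
      exact ⟨a, by omega, b, h', he.symm⟩
  set j₀ := Nat.find hJ with hj₀
  obtain ⟨hj₀pos, i₀, hi₀lt, hi₀eq⟩ := Nat.find_spec hJ
  have hdist : ∀ a b, a < b → b < j₀ → u a ≠ u b := by
    intro a b hab hbj hc
    exact Nat.find_min hJ hbj ⟨by omega, a, hab, hc⟩
  set ℓ := j₀ - i₀ with hℓdef
  have hℓpos : 0 < ℓ := by omega
  refine ⟨ℓ, hℓpos, fun t => u (i₀ + t.val), ?_, fun t => huS _, ?_⟩
  · intro t t' he
    have ht1 := t.isLt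
    have ht2 := t'.isLt
    apply Fin.ext
    by_contra hne'
    rcases Nat.lt_or_ge t.val t'.val with h | h
    · exact hdist _ _ (by omega) (by omega) he
    · have h' : t'.val < t.val := by omega
      exact hdist _ _ (by omega) (by omega) he.symm
  · intro t
    have ht1 := t.isLt
    show g (u (i₀ + t.val)) = u (i₀ + (t.val + 1) % ℓ)
    rw [← husucc (i₀ + t.val)]
    by_cases h : t.val + 1 < ℓ
    · have h2 : (t.val + 1) % ℓ = t.val + 1 := Nat.mod_eq_of_lt h
      congr 1
      omega
    · have h1 : i₀ + t.val + 1 = j₀ := by omega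
      have h2 : (t.val + 1) % ℓ = 0 := by
        have h3 : t.val + 1 = ℓ := by omega
        rw [h3, Nat.mod_self]
      rw [h2, h1, Nat.add_zero]
      exact hi₀eq.symm


lemma cycle_step {n : ℕ} (P P' : Fin n → Pt) (g : Fin n → Fin n) (x0 : Fin n)
    (hg : ∀ i, P' i = P (g i))
    (U : Finset (Fin n)) (C : Fin n → Pt) (hx0U : x0 ∉ U)
    (h1 : ∀ i, i ∉ U → i ≠ x0 → C i = P' i)
    (h2 : ∀ i ∈ U, C i = P i)
    (hcl : ∀ u ∈ U, g u ∈ U)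
    (ℓ : ℕ) [NeZero ℓ] (hℓ2 : 2 ≤ ℓ) (σ : Fin ℓ → Fin n)
    (hinj : Function.Injective σ) (hσU : ∀ t, σ t ∈ U)
    (hcyc : ∀ t, g (σ t) = σ (t + 1)) :
    ∃ L : List (Fin n × Fin n), (∀ m ∈ L, m.1 ≠ m.2) ∧ L.length = ℓ + 1 ∧
      applyc L C x0 = P (σ 0) ∧
      (Finset.image σ Finset.univ) ⊆ U ∧ (Finset.image σ Finset.univ).card = ℓ ∧
      (∀ i, i ∉ U \ Finset.image σ Finset.univ → i ≠ x0 → applyc L C i = P' i) ∧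
      (∀ i ∈ U \ Finset.image σ Finset.univ, applyc L C i = P i) ∧
      (∀ v ∈ U \ Finset.image σ Finset.univ,
        g v ∈ U \ Finset.image σ Finset.univ ∨
          ∃ p, p ∉ U \ Finset.image σ Finset.univ ∧ p ≠ x0 ∧ P' p = P' v) := by
  classical
  have hx0σ : ∀ t, σ t ≠ x0 := fun t hc => hx0U (hc ▸ hσU t)
  obtain ⟨L, hLv, hLlen, hLσ, hLx0, hLother⟩ :=
    cycle_moves P P' g x0 hg C ℓ hℓ2 σ hinj hx0σ (fun t => h2 _ (hσU t)) hcyc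
  set Sσ := Finset.image σ Finset.univ with hSσ
  have hmemSσ : ∀ i, i ∈ Sσ ↔ ∃ t, σ t = i := by
    intro i; simp [hSσ]
  have hSσU : Sσ ⊆ U := by
    intro i hi; obtain ⟨t, ht⟩ := (hmemSσ i).mp hi; exact ht ▸ hσU t
  have hcard : Sσ.card = ℓ := by
    rw [hSσ, Finset.card_image_of_injective _ hinj, Finset.card_univ, Fintype.card_fin]
  refine ⟨L, hLv, hLlen, hLx0, hSσU, hcard, ?_, ?_, ?_⟩
  · intro i hi hix
    by_cases hiσ : i ∈ Sσ
    · obtain ⟨t, ht⟩ := (hmemSσ i).mp hiσ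
      rw [← ht]; exact hLσ t
    · have hiU : i ∉ U := fun hc => hi (Finset.mem_sdiff.mpr ⟨hc, hiσ⟩)
      have hne : ∀ t, i ≠ σ t := fun t hc => hiσ ((hmemSσ i).mpr ⟨t, hc.symm⟩)
      rw [hLother i hne hix]
      exact h1 i hiU hix
  · intro i hi
    obtain ⟨hiU, hiσ⟩ := Finset.mem_sdiff.mp hi
    have hix : i ≠ x0 := fun hc => hx0U (hc ▸ hiU)
    have hne : ∀ t, i ≠ σ t := fun t hc => hiσ ((hmemSσ i).mpr ⟨t, hc.symm⟩)
    rw [hLother i hne hix]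
    exact h2 i hiU
  · intro v hv
    obtain ⟨hvU, hvσ⟩ := Finset.mem_sdiff.mp hv
    by_cases hgσ : g v ∈ Sσ
    · obtain ⟨s, hs⟩ := (hmemSσ _).mp hgσ
      right
      refine ⟨σ (s - 1), fun hc => (Finset.mem_sdiff.mp hc).2 ((hmemSσ _).mpr ⟨s - 1, rfl⟩),
        hx0σ _, ?_⟩
      rw [hg (σ (s - 1)), hcyc (s - 1), sub_add_cancel, hs, ← hg v]
    · left
      exact Finset.mem_sdiff.mpr ⟨hcl v hvU, hgσ⟩


lemma core_main {n : ℕ} (P P' : Fin n → Pt) (g : Fin n → Fin n) (x0 y0 : Fin n)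
    (hg : ∀ i, P' i = P (g i)) (hxy : x0 ≠ y0) (hP'xy : P' x0 = P' y0) :
    ∀ (N : ℕ) (U : Finset (Fin n)) (C : Fin n → Pt) (flag : Bool),
      U.card ≤ N → x0 ∉ U →
      (∀ i, i ∉ U → i ≠ x0 → C i = P' i) →
      (∀ i ∈ U, C i = P i) →
      (∀ i ∈ U, P' i ≠ P i) →
      (∀ u ∈ U, g u ∈ U ∨ (g u = x0 ∧ C x0 = P x0) ∨ ∃ p, p ∉ U ∧ p ≠ x0 ∧ P' p = P' u) →
      (flag = true → C x0 = P' x0 ∧ ∀ S ⊆ U, S.Nonempty → ∃ v ∈ S, g v ∉ S) →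
      ∃ L : List (Fin n × Fin n), (∀ m ∈ L, m.1 ≠ m.2) ∧ applyc L C = P' ∧
        L.length ≤ U.card + (if flag then 0 else (U.erase y0).card / 2 + 1) := by
  classical
  intro N
  induction N with
  | zero =>
    intro U C flag hcard hx0U h1 h2 hM hINV hflag
    have hUe : U = ∅ := Finset.card_eq_zero.mp (Nat.le_zero.mp hcard)
    subst hUe
    cases flag with
    | true =>
      refine ⟨[], by simp, ?_, by simp⟩
      funext i
      by_cases hi : i = x0
      · rw [hi]; exact (hflag rfl).1
      · exact h1 i (by simp) hi
    | false =>
      refine ⟨[(x0, y0)], by simpa using hxy, ?_, by simp⟩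
      have hy : C y0 = P' x0 := by
        rw [h1 y0 (by simp) hxy.symm]; exact hP'xy.symm
      funext i
      show stepc C (x0, y0) i = P' i
      by_cases hi : i = x0
      · rw [hi, show stepc C (x0, y0) x0 = C y0 from stepc_fst C (x0, y0), hy]
      · rw [stepc_other _ _ _ hi]
        exact h1 i (by simp) hi
  | succ N ih =>
    intro U C flag hcard hx0U h1 h2 hM hINV hflag
    by_cases hUe : U = ∅
    · -- same as base case
      subst hUe
      cases flag with
      | true =>
        refine ⟨[], by simp, ?_, by simp⟩
        funext i
        by_cases hi : i = x0
        · rw [hi]; exact (hflag rfl).1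
        · exact h1 i (by simp) hi
      | false =>
        refine ⟨[(x0, y0)], by simpa using hxy, ?_, by simp⟩
        have hy : C y0 = P' x0 := by
          rw [h1 y0 (by simp) hxy.symm]; exact hP'xy.symm
        funext i
        show stepc C (x0, y0) i = P' i
        by_cases hi : i = x0
        · rw [hi, show stepc C (x0, y0) x0 = C y0 from stepc_fst C (x0, y0), hy]
        · rw [stepc_other _ _ _ hi]
          exact h1 i (by simp) hi
    · have hUne : U.Nonempty := Finset.nonempty_of_ne_empty hUe
      have hUcardpos : 0 < U.card := Finset.card_pos.mpr hUne
      by_cases hpf : ∃ u ∈ U, ∀ v ∈ U, g v ≠ u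
      · -- peel a predecessor-free vertex
        obtain ⟨u, huU, hupf⟩ := hpf
        have hMu := hM u huU
        have hgu : g u ≠ u := fun h => hMu (by rw [hg u, h])
        have hux0 : u ≠ x0 := fun hc => hx0U (hc ▸ huU)
        have hsrc : ∃ src, src ≠ u ∧ C src = P' u := by
          rcases hINV u huU with h | ⟨h, hcx⟩ | ⟨p, hpU, hpx, hpv⟩
          · exact ⟨g u, hgu, by rw [h2 _ h]; exact (hg u).symm⟩
          · refine ⟨x0, fun hc => hx0U (hc ▸ huU), ?_⟩
            rw [hcx, ← h]; exact (hg u).symm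
          · refine ⟨p, fun hc => hpU (hc ▸ huU), ?_⟩
            rw [h1 p hpU hpx, hpv]
        obtain ⟨src, hsu, hsrcval⟩ := hsrc
        set C' := stepc C (u, src) with hC'
        have hC'u : C' u = P' u := by
          rw [hC', show stepc C (u, src) u = C src from stepc_fst C (u, src), hsrcval]
        have hC'other : ∀ i, i ≠ u → C' i = C i := by
          intro i hi; rw [hC', stepc_other _ _ _ hi]
        have hcard' : (U.erase u).card ≤ N := by
          rw [Finset.card_erase_of_mem huU]; omega
        obtain ⟨L, hLv, hLapp, hLlen⟩ := ih (U.erase u) C' flag hcard'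
          (fun hc => hx0U (Finset.mem_of_mem_erase hc))
          (by
            intro i hi hix
            by_cases hiu : i = u
            · rw [hiu, hC'u]
            · rw [hC'other i hiu]
              exact h1 i (fun hU' => hi (Finset.mem_erase.mpr ⟨hiu, hU'⟩)) hix)
          (by
            intro i hi
            have hiu : i ≠ u := (Finset.mem_erase.mp hi).1
            rw [hC'other i hiu]
            exact h2 i (Finset.mem_of_mem_erase hi))
          (fun i hi => hM i (Finset.mem_of_mem_erase hi))
          (by
            intro v hv
            have hvU := Finset.mem_of_mem_erase hv
            rcases hINV v hvU with h | ⟨h, hcx⟩ | ⟨p, hp1, hp2, hp3⟩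
            · left; exact Finset.mem_erase.mpr ⟨hupf v hvU, h⟩
            · right; left; exact ⟨h, by rw [hC'other x0 hux0.symm]; exact hcx⟩
            · right; right; exact ⟨p, fun hc => hp1 (Finset.mem_of_mem_erase hc), hp2, hp3⟩)
          (by
            intro hf
            refine ⟨by rw [hC'other x0 hux0.symm]; exact (hflag hf).1, ?_⟩
            intro S hS hSne
            exact (hflag hf).2 S (hS.trans (Finset.erase_subset _ _)) hSne)
        refine ⟨(u, src) :: L, ?_, by rw [applyc_cons]; exact hLapp, ?_⟩
        · intro m hm
          rcases List.mem_cons.mp hm with h | h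
          · rw [h]; exact hsu.symm
          · exact hLv m h
        · have hemono : ((U.erase u).erase y0).card ≤ (U.erase y0).card :=
            Finset.card_le_card (Finset.erase_subset_erase y0 (Finset.erase_subset u U))
          have hce : (U.erase u).card = U.card - 1 := Finset.card_erase_of_mem huU
          rw [List.length_cons]
          cases flag with
          | true => simp only [if_true] at hLlen ⊢; omega
          | false =>
            simp only [if_false, Bool.false_eq_true] at hLlen ⊢
            have hd2 : ((U.erase u).erase y0).card / 2 ≤ (U.erase y0).card / 2 :=
              Nat.div_le_div_right hemono
            omega
      · -- no predecessor-free vertex: U is g-closed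
        have hpred : ∀ u ∈ U, ∃ v ∈ U, g v = u := by
          intro u hu
          by_contra hc
          push_neg at hc
          exact hpf ⟨u, hu, hc⟩
        have hcl : ∀ u ∈ U, g u ∈ U := closed_of_nopred g U hpred
        cases flag with
        | true =>
          exfalso
          obtain ⟨-, hnc⟩ := hflag rfl
          obtain ⟨v, hv, hgv⟩ := hnc U (Finset.Subset.refl U) hUne
          exact hgv (hcl v hv)
        | false =>
          by_cases hS : ∃ S : Finset (Fin n), S ⊆ U.erase y0 ∧ S.Nonempty ∧ ∀ s ∈ S, g s ∈ S
          · -- a cycle avoiding y0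
            obtain ⟨S, hSsub, hSne, hScl⟩ := hS
            obtain ⟨ℓ, hℓpos, σ, hinj, hσS, hcycm⟩ := exists_cycle g S hSne hScl
            haveI : NeZero ℓ := ⟨by omega⟩
            have hσU : ∀ t, σ t ∈ U := fun t => Finset.mem_of_mem_erase (hSsub (hσS t))
            have hσy0 : ∀ t, σ t ≠ y0 := fun t => (Finset.mem_erase.mp (hSsub (hσS t))).1
            have hℓ2 : 2 ≤ ℓ := by
              by_contra hcon
              have hℓ1 : ℓ = 1 := by omega
              subst hℓ1
              have ht := hcycm ⟨0, by omega⟩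
              have hteq : (⟨(0 + 1) % 1, Nat.mod_lt _ hℓpos⟩ : Fin 1) = ⟨0, by omega⟩ := by
                apply Fin.ext; simp
              rw [hteq] at ht
              exact hM _ (hσU ⟨0, by omega⟩) (by rw [hg, ht])
            have hone : (1 : Fin ℓ).val = 1 := by
              rw [Fin.val_one']; exact Nat.mod_eq_of_lt hℓ2
            have hcyc : ∀ t : Fin ℓ, g (σ t) = σ (t + 1) := by
              intro t
              rw [hcycm t]
              congr 1
              apply Fin.ext
              rw [Fin.val_add, hone]
            obtain ⟨Lc, hLcv, hLclen, hLcx0, hSσU, hSσcard, k1, k2, k3⟩ :=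
              cycle_step P P' g x0 hg U C hx0U h1 h2 hcl ℓ hℓ2 σ hinj hσU hcyc
            set Sσ := Finset.image σ Finset.univ with hSσdef
            set U' := U \ Sσ with hU'
            have hU'card : U'.card = U.card - ℓ := by
              rw [hU', Finset.card_sdiff_of_subset hSσU, hSσcard]
            have hx0U' : x0 ∉ U' := fun hc => hx0U (Finset.mem_sdiff.mp hc).1
            have hSσy0sub : Sσ ⊆ U.erase y0 := by
              intro i hi
              obtain ⟨t, -, ht⟩ := Finset.mem_image.mp hi
              exact ht ▸ Finset.mem_erase.mpr ⟨hσy0 t, hσU t⟩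
            have hℓle : ℓ ≤ (U.erase y0).card := by
              rw [← hSσcard]; exact Finset.card_le_card hSσy0sub
            have hU'e : U'.erase y0 = (U.erase y0) \ Sσ := by
              ext i
              simp only [Finset.mem_erase, Finset.mem_sdiff, hU']
              tauto
            have hU'ecard : (U'.erase y0).card = (U.erase y0).card - ℓ := by
              rw [hU'e, Finset.card_sdiff_of_subset hSσy0sub, hSσcard]
            obtain ⟨L', hL'v, hL'app, hL'len⟩ := ih U' (applyc Lc C) false
              (by omega)
              hx0U'
              k1 k2
              (fun i hi => hM i (Finset.mem_sdiff.mp hi).1)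
              (by
                intro v hv
                rcases k3 v hv with h | ⟨p, hp1, hp2, hp3⟩
                · left; exact h
                · right; right; exact ⟨p, hp1, hp2, hp3⟩)
              (fun hf => by simp at hf)
            refine ⟨Lc ++ L', ?_, by rw [applyc_append]; exact hL'app, ?_⟩
            · intro m hm
              rcases List.mem_append.mp hm with h | h
              · exact hLcv m h
              · exact hL'v m h
            · rw [List.length_append, hLclen]
              simp only [if_false, Bool.false_eq_true] at hL'len ⊢
              rw [hU'card, hU'ecard] at hL'len
              have hℓU : ℓ ≤ U.card := by rw [← hSσcard]; exact Finset.card_le_card hSσU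
              omega
          · -- every cycle goes through y0
            obtain ⟨ℓ, hℓpos, σ, hinj, hσU, hcycm⟩ := exists_cycle g U hUne hcl
            haveI : NeZero ℓ := ⟨by omega⟩
            have hℓ2 : 2 ≤ ℓ := by
              by_contra hcon
              have hℓ1 : ℓ = 1 := by omega
              subst hℓ1
              have ht := hcycm ⟨0, by omega⟩
              have hteq : (⟨(0 + 1) % 1, Nat.mod_lt _ hℓpos⟩ : Fin 1) = ⟨0, by omega⟩ := by
                apply Fin.ext; simp
              rw [hteq] at ht
              exact hM _ (hσU ⟨0, by omega⟩) (by rw [hg, ht])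
            have hone : (1 : Fin ℓ).val = 1 := by
              rw [Fin.val_one']; exact Nat.mod_eq_of_lt hℓ2
            have hcyc : ∀ t : Fin ℓ, g (σ t) = σ (t + 1) := by
              intro t
              rw [hcycm t]
              congr 1
              apply Fin.ext
              rw [Fin.val_add, hone]
            -- the cycle must contain y0
            have hy0mem : ∃ ty, σ ty = y0 := by
              by_contra hc
              push_neg at hc
              refine hS ⟨Finset.image σ Finset.univ, ?_, ?_, ?_⟩
              · intro i hi
                obtain ⟨t, -, ht⟩ := Finset.mem_image.mp hi
                exact ht ▸ Finset.mem_erase.mpr ⟨hc t, hσU t⟩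
              · exact ⟨σ 0, Finset.mem_image.mpr ⟨0, Finset.mem_univ _, rfl⟩⟩
              · intro s hs
                obtain ⟨t, -, ht⟩ := Finset.mem_image.mp hs
                rw [← ht, hcyc t]
                exact Finset.mem_image.mpr ⟨t + 1, Finset.mem_univ _, rfl⟩
            obtain ⟨ty, hty⟩ := hy0mem
            -- rotate the cycle to start right after y0
            set σ' : Fin ℓ → Fin n := fun t => σ (ty + 1 + t) with hσ'
            have hinj' : Function.Injective σ' := by
              intro a b hab
              have := hinj hab
              exact add_left_cancel this
            have hσ'U : ∀ t, σ' t ∈ U := fun t => hσU _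
            have hcyc' : ∀ t : Fin ℓ, g (σ' t) = σ' (t + 1) := by
              intro t
              rw [hσ']
              show g (σ (ty + 1 + t)) = σ (ty + 1 + (t + 1))
              rw [hcyc (ty + 1 + t)]
              congr 1
              exact add_assoc _ _ _
            have hσ'0 : σ' 0 = g y0 := by
              rw [hσ', ← hty, hcyc ty]
              show σ (ty + 1 + 0) = σ (ty + 1)
              rw [add_zero]
            have hy0σ' : ∃ t, σ' t = y0 := by
              refine ⟨-1, ?_⟩
              rw [hσ', ← hty]
              show σ (ty + 1 + -1) = σ ty
              congr 1
              exact add_neg_cancel_right ty 1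
            obtain ⟨Lc, hLcv, hLclen, hLcx0, hSσU, hSσcard, k1, k2, k3⟩ :=
              cycle_step P P' g x0 hg U C hx0U h1 h2 hcl ℓ hℓ2 σ' hinj' hσ'U hcyc'
            have hLcx0' : applyc Lc C x0 = P' x0 := by
              rw [hLcx0, hσ'0, ← hg y0, hP'xy]
            set Sσ := Finset.image σ' Finset.univ with hSσdef
            set U' := U \ Sσ with hU'
            have hU'card : U'.card = U.card - ℓ := by
              rw [hU', Finset.card_sdiff_of_subset hSσU, hSσcard]
            have hx0U' : x0 ∉ U' := fun hc => hx0U (Finset.mem_sdiff.mp hc).1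
            have hy0Sσ : y0 ∈ Sσ := by
              obtain ⟨t, ht⟩ := hy0σ'
              exact Finset.mem_image.mpr ⟨t, Finset.mem_univ _, ht⟩
            obtain ⟨L', hL'v, hL'app, hL'len⟩ := ih U' (applyc Lc C) true
              (by
                have hℓU : ℓ ≤ U.card := by
                  rw [← hSσcard]; exact Finset.card_le_card hSσU
                omega)
              hx0U'
              k1 k2
              (fun i hi => hM i (Finset.mem_sdiff.mp hi).1)
              (by
                intro v hv
                rcases k3 v hv with h | ⟨p, hp1, hp2, hp3⟩
                · left; exact h
                · right; right; exact ⟨p, hp1, hp2, hp3⟩)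
              (by
                intro _hf
                refine ⟨hLcx0', ?_⟩
                intro S hSsub hSne
                by_contra hc
                push_neg at hc
                refine hS ⟨S, ?_, hSne, hc⟩
                intro i hi
                have hiU' := hSsub hi
                obtain ⟨hiU, hiσ⟩ := Finset.mem_sdiff.mp hiU'
                exact Finset.mem_erase.mpr ⟨fun he => hiσ (he ▸ hy0Sσ), hiU⟩)
            refine ⟨Lc ++ L', ?_, by rw [applyc_append]; exact hL'app, ?_⟩
            · intro m hm
              rcases List.mem_append.mp hm with h | h
              · exact hLcv m h
              · exact hL'v m h
            · rw [List.length_append, hLclen]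
              simp only [if_true] at hL'len
              simp only [if_false, Bool.false_eq_true]
              rw [hU'card] at hL'len
              have hℓU : ℓ ≤ U.card := by rw [← hSσcard]; exact Finset.card_le_card hSσU
              omega



/-- If every vertex of `P'` occupies a vertex of `P`, and `P` has a
double point, then one can go from `P'` to `P` in at most `3n/2` push-out moves. -/
theorem statement7 (n : ℕ) (hn : 3 ≤ n) (P P' : Fin n → Pt)
    (hocc : ∀ i : Fin n, ∃ j : Fin n, P' i = P j)
    (hdp : ∃ i j : Fin n, i ≠ j ∧ P i = P j) :
    ∃ k : ℕ, 2 * k ≤ 3 * n ∧ MoveChain PushOut k P' P := by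
  classical
  choose g hg using hocc
  obtain ⟨a, b, hab, hPab⟩ := hdp
  -- a double point of P'
  have hdub : ∃ x0 : Fin n, ∃ y0 : Fin n, x0 ≠ y0 ∧ P' x0 = P' y0 := by
    have hsub : Finset.univ.image P ⊆ (Finset.univ.erase b).image P := by
      intro c hc
      obtain ⟨i, -, hi⟩ := Finset.mem_image.mp hc
      by_cases hib : i = b
      · refine Finset.mem_image.mpr ⟨a, Finset.mem_erase.mpr ⟨hab, Finset.mem_univ _⟩, ?_⟩
        rw [hPab, ← hib, hi]
      · exact Finset.mem_image.mpr ⟨i, Finset.mem_erase.mpr ⟨hib, Finset.mem_univ _⟩, hi⟩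
    have hlt : (Finset.univ.image P).card < (Finset.univ : Finset (Fin n)).card := by
      have h1 : (Finset.univ.image P).card ≤ ((Finset.univ.erase b).image P).card :=
        Finset.card_le_card hsub
      have h2 : ((Finset.univ.erase b).image P).card ≤ (Finset.univ.erase b).card :=
        Finset.card_image_le
      have h3 : ((Finset.univ : Finset (Fin n)).erase b).card = n - 1 := by
        rw [Finset.card_erase_of_mem (Finset.mem_univ _), Finset.card_univ, Fintype.card_fin]
      rw [Finset.card_univ, Fintype.card_fin]
      omega
    have hmaps : ∀ i : Fin n, i ∈ Finset.univ → P' i ∈ Finset.univ.image P :=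
      fun i _ => Finset.mem_image.mpr ⟨g i, Finset.mem_univ _, (hg i).symm⟩
    obtain ⟨x0, -, y0, -, hxy, he⟩ :=
      Finset.exists_ne_map_eq_of_card_lt_of_maps_to hlt hmaps
    exact ⟨x0, y0, hxy, he⟩
  obtain ⟨x0, y0, hxy, hP'xy⟩ := hdub
  set U₀ : Finset (Fin n) :=
    (Finset.univ.filter fun i => P' i ≠ P i).erase x0 with hU₀
  have hx0U₀ : x0 ∉ U₀ := Finset.notMem_erase _ _
  have hmemU₀ : ∀ i, i ∈ U₀ ↔ (i ≠ x0 ∧ P' i ≠ P i) := by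
    intro i
    rw [hU₀, Finset.mem_erase, Finset.mem_filter]
    simp [Finset.mem_univ]
  obtain ⟨L, hLv, hLapp, hLlen⟩ := core_main P P' g x0 y0 hg hxy hP'xy U₀.card U₀ P false
    le_rfl hx0U₀
    (by
      intro i hi hix
      by_contra hc
      exact hi ((hmemU₀ i).mpr ⟨hix, fun he => hc he.symm⟩))
    (fun i _ => rfl)
    (fun i hi => ((hmemU₀ i).mp hi).2)
    (by
      intro u hu
      by_cases h1 : g u ∈ U₀
      · exact Or.inl h1
      · by_cases h2 : g u = x0
        · exact Or.inr (Or.inl ⟨h2, rfl⟩)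
        · refine Or.inr (Or.inr ⟨g u, h1, h2, ?_⟩)
          have : ¬(P' (g u) ≠ P (g u)) := fun hc => h1 ((hmemU₀ _).mpr ⟨h2, hc⟩)
          push_neg at this
          rw [this, ← hg u])
    (by intro h; simp at h)
  have hchain : MoveChain PushOut L.length P' P := by
    have := moveChain_of_applyc L hLv P
    rwa [hLapp] at this
  refine ⟨L.length, ?_, hchain⟩
  have hc1 : U₀.card ≤ n - 1 := by
    have hsub : U₀ ⊆ Finset.univ.erase x0 :=
      Finset.erase_subset_erase x0 (Finset.filter_subset _ _)
    have := Finset.card_le_card hsub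
    rwa [Finset.card_erase_of_mem (Finset.mem_univ _), Finset.card_univ,
      Fintype.card_fin] at this
  have hc2 : (U₀.erase y0).card ≤ n - 2 := by
    have hsub : U₀.erase y0 ⊆ (Finset.univ.erase x0).erase y0 :=
      Finset.erase_subset_erase y0 (Finset.erase_subset_erase x0 (Finset.filter_subset _ _))
    have h3 := Finset.card_le_card hsub
    have h4 : ((Finset.univ.erase x0).erase y0).card = n - 2 := by
      rw [Finset.card_erase_of_mem
        (Finset.mem_erase.mpr ⟨hxy.symm, Finset.mem_univ _⟩),
        Finset.card_erase_of_mem (Finset.mem_univ _), Finset.card_univ, Fintype.card_fin]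
      omega
    omega
  simp only [if_false, Bool.false_eq_true] at hLlen
  omega



end
end

section
/- Let P be a convex n-gon oriented counterclockwise. For every m-gon Q with co(Q) ⊆ co(P) and m < n, there exists an (n−1)-gon Q' that is maximal degenerate in P and satisfies co(Q) ⊆ co(Q') ⊆ co(P). -/
noncomputable section

namespace S8

lemma fin_one_ne_zero {n : ℕ} (hn : 3 ≤ n) [NeZero n] : (1 : Fin n) ≠ 0 := by
  intro h
  have h1 : ((1 : Fin n) : ℕ) = 1 % n := Fin.val_one' n
  rw [h] at h1
  simp at h1
  omega

lemma fin_two_ne_zero {n : ℕ} (hn : 3 ≤ n) [NeZero n] : (1 : Fin n) + 1 ≠ 0 := by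
  intro h
  have h1 : ((1 : Fin n) : ℕ) = 1 % n := Fin.val_one' n
  have h2 : (((1 : Fin n) + 1 : Fin n) : ℕ) = (((1:Fin n):ℕ) + ((1:Fin n):ℕ)) % n := Fin.val_add 1 1
  rw [h] at h2
  rw [h1] at h2
  have hm : 1 % n = 1 := Nat.mod_eq_of_lt (by omega)
  rw [hm] at h2
  simp only [Fin.val_zero] at h2
  rw [Nat.mod_eq_of_lt (by omega : 1+1 < n)] at h2
  omega

lemma fin_add_one_ne {n : ℕ} (hn : 3 ≤ n) [NeZero n] (i : Fin n) : i + 1 ≠ i := by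
  intro h
  exact fin_one_ne_zero hn (add_eq_left.mp h)

lemma fin_add_two_ne {n : ℕ} (hn : 3 ≤ n) [NeZero n] (i : Fin n) : i + 1 + 1 ≠ i := by
  intro h
  rw [add_assoc] at h
  exact fin_two_ne_zero hn (add_eq_left.mp h)

lemma det3_self_left (a b : Pt) : det3 a b a = 0 := by unfold det3; ring
lemma det3_self_right (a b : Pt) : det3 a b b = 0 := by unfold det3; ring
lemma det3_self_ab (a c : Pt) : det3 a a c = 0 := by unfold det3; ring

lemma det3_combo (a b x y : Pt) (α β : ℝ) (h : α + β = 1) :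
    det3 a b (α • x + β • y) = α * det3 a b x + β * det3 a b y := by
  have hβ : β = 1 - α := by linarith
  subst hβ
  simp only [det3]
  have h0 : (α • x + (1-α) • y) 0 = α * x 0 + (1-α) * y 0 := rfl
  have h1 : (α • x + (1-α) • y) 1 = α * x 1 + (1-α) * y 1 := rfl
  rw [h0, h1]; ring

/-- halfplane nonnegativity on the hull -/
lemma det3_nonneg_hull {n : ℕ} (hn : 3 ≤ n) [NeZero n] {P : Fin n → Pt} (hP : CCW P)
    (i : Fin n) {x : Pt} (hx : x ∈ hull P) : 0 ≤ det3 (P i) (P (i+1)) x := by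
  have hsub : Set.range P ⊆ {z : Pt | 0 ≤ det3 (P i) (P (i+1)) z} := by
    rintro _ ⟨j, rfl⟩
    by_cases h1 : j = i
    · subst h1; simp [det3_self_left]
    by_cases h2 : j = i + 1
    · subst h2; simp [det3_self_right]
    · exact le_of_lt (hP i j h1 h2)
  have hconv : Convex ℝ {z : Pt | 0 ≤ det3 (P i) (P (i+1)) z} := by
    intro u hu v hv α β hα hβ hαβ
    simp only [Set.mem_setOf_eq] at *
    rw [det3_combo _ _ _ _ _ _ hαβ]
    exact add_nonneg (mul_nonneg hα hu) (mul_nonneg hβ hv)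
  exact convexHull_min hsub hconv hx

lemma P_injective {n : ℕ} (hn : 3 ≤ n) [NeZero n] {P : Fin n → Pt} (hP : CCW P) :
    Function.Injective P := by
  intro j k h
  by_contra hne
  by_cases h1 : j = k + 1
  · subst h1
    -- P (k+1) = P k
    have hd := hP k (k+1+1) (fin_add_two_ne hn k) (by
      intro hh
      exact fin_add_one_ne hn (k+1) hh)
    rw [show P (k+1) = P k from h] at hd
    rw [det3_self_ab] at hd; exact lt_irrefl _ hd
  · have hd := hP k j (Ne.symm ?_) h1
    · rw [h] at hd
      rw [det3_self_left] at hd; exact lt_irrefl _ hd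
    · intro hh; exact hne hh.symm


/-- A point in all edge-halfplanes lying on the line of edge `i` is on edge `i`. -/
lemma mem_edge_of_det_eq {n : ℕ} (hn : 3 ≤ n) [NeZero n] {P : Fin n → Pt} (hP : CCW P)
    (i : Fin n) {x : Pt} (hall : ∀ j : Fin n, 0 ≤ det3 (P j) (P (j+1)) x)
    (hz : det3 (P i) (P (i+1)) x = 0) : x ∈ segment ℝ (P i) (P (i+1)) := by
  set a := P i with ha
  set b := P (i+1) with hb
  have hab : a ≠ b := fun h => (fin_add_one_ne hn i) (P_injective hn hP h.symm)
  have hz' : (b 0 - a 0) * (x 1 - a 1) = (b 1 - a 1) * (x 0 - a 0) := by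
    unfold det3 at hz; linarith
  -- find σ with x = a + σ (b - a), coordinatewise
  have hcoords : ∃ σ : ℝ, x 0 = a 0 + σ * (b 0 - a 0) ∧ x 1 = a 1 + σ * (b 1 - a 1) := by
    by_cases he0 : b 0 - a 0 ≠ 0
    · refine ⟨(x 0 - a 0)/(b 0 - a 0), by field_simp; ring, ?_⟩
      field_simp
      linarith [hz']
    · push_neg at he0
      have he1 : b 1 - a 1 ≠ 0 := by
        intro he1
        apply hab
        ext j
        fin_cases j
        · show a 0 = b 0; linarith
        · show a 1 = b 1; linarith
      have hx0a : x 0 = a 0 := by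
        rw [he0, zero_mul] at hz'
        rcases mul_eq_zero.mp hz'.symm with h | h
        · exact absurd h he1
        · linarith
      refine ⟨(x 1 - a 1)/(b 1 - a 1), ?_, by field_simp; ring⟩
      rw [he0, hx0a]; ring
  obtain ⟨σ, hx0, hx1⟩ := hcoords
  -- upper bound from edge i+1
  have hD1 : 0 < det3 a b (P (i+1+1)) := by
    exact hP i (i+1+1) (fin_add_two_ne hn i) (fun h => fin_add_one_ne hn (i+1) h)
  have hk1 : det3 (P (i+1)) (P (i+1+1)) x = (1 - σ) * det3 a b (P (i+1+1)) := by
    rw [← hb]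
    set c := P (i+1+1)
    unfold det3
    rw [hx0, hx1]; ring
  have hσ1 : σ ≤ 1 := by
    have h1 := hall (i+1)
    rw [hk1] at h1
    by_contra hc
    push_neg at hc
    nlinarith
  -- lower bound from edge i-1
  have hD2 : 0 < det3 (P (i-1)) (P i) (P (i+1)) := by
    have := hP (i-1) (i+1) ?hA ?hB
    · rwa [sub_add_cancel i 1] at this
    case hA =>
      intro h
      have : i + 1 + 1 = i := by
        have h' : i + 1 = i - 1 := h
        rw [h']; rw [sub_add_cancel]
      exact fin_add_two_ne hn i this
    case hB =>
      rw [sub_add_cancel i 1]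
      exact fin_add_one_ne hn i
  have hk2 : det3 (P (i-1)) (P i) x = σ * det3 (P (i-1)) (P i) (P (i+1)) := by
    rw [← ha, ← hb] at *
    unfold det3
    rw [hx0, hx1]; ring
  have hσ0 : 0 ≤ σ := by
    have h2 := hall (i-1)
    rw [sub_add_cancel i 1] at h2
    rw [hk2] at h2
    by_contra hc
    push_neg at hc
    nlinarith
  -- conclude
  refine ⟨1 - σ, σ, by linarith, hσ0, by ring, ?_⟩
  ext j
  have hj0 : ((1-σ) • a + σ • b) 0 = (1-σ) * a 0 + σ * b 0 := rfl
  have hj1 : ((1-σ) • a + σ • b) 1 = (1-σ) * a 1 + σ * b 1 := rfl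
  fin_cases j
  · show ((1-σ) • a + σ • b) 0 = x 0
    rw [hj0, hx0]; ring
  · show ((1-σ) • a + σ • b) 1 = x 1
    rw [hj1, hx1]; ring


lemma det3_translate (a b x d : Pt) (t : ℝ) :
    det3 a b (x + t • d) = det3 a b x
      + t * ((b 0 - a 0) * d 1 - (b 1 - a 1) * d 0) := by
  unfold det3
  have h0 : (x + t • d) 0 = x 0 + t * d 0 := rfl
  have h1 : (x + t • d) 1 = x 1 + t * d 1 := rfl
  rw [h0, h1]; ring

/-- Exit point of a ray from a point of the hull. -/
lemma exit_ray {n : ℕ} (hn : 3 ≤ n) [NeZero n] {P : Fin n → Pt} (hP : CCW P)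
    {a : Pt} (ha : a ∈ hull P) {d : Pt} (hd : d ≠ 0) :
    ∃ T : ℝ, 0 ≤ T ∧ (a + T • d) ∈ bdry P ∧ ((a + d) ∈ hull P → 1 ≤ T) := by
  classical
  set lin : Fin n → ℝ := fun j => (P (j+1) 0 - P j 0) * d 1 - (P (j+1) 1 - P j 1) * d 0
    with hlin
  -- some lin j < 0
  have hneg : ∃ j, lin j < 0 := by
    by_contra hcon
    push_neg at hcon
    have hsum : ∑ j : Fin n, lin j = 0 := by
      have e1 : ∑ j : Fin n, P (j+1) 0 = ∑ j : Fin n, P j 0 :=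
        Fintype.sum_equiv (Equiv.addRight (1 : Fin n)) _ _ (fun j => rfl)
      have e2 : ∑ j : Fin n, P (j+1) 1 = ∑ j : Fin n, P j 1 :=
        Fintype.sum_equiv (Equiv.addRight (1 : Fin n)) _ _ (fun j => rfl)
      have : ∑ j : Fin n, lin j
          = (∑ j : Fin n, (P (j+1) 0 - P j 0)) * d 1
            - (∑ j : Fin n, (P (j+1) 1 - P j 1)) * d 0 := by
        rw [Finset.sum_mul, Finset.sum_mul, ← Finset.sum_sub_distrib]
      rw [this, Finset.sum_sub_distrib, Finset.sum_sub_distrib, e1, e2]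
      ring
    have hzero : ∀ j ∈ Finset.univ, lin j = 0 :=
      (Finset.sum_eq_zero_iff_of_nonneg (fun j _ => hcon j)).mp hsum
    -- edges 0 and 0+1
    have hz0 := hzero 0 (Finset.mem_univ _)
    have hz1 := hzero (0+1) (Finset.mem_univ _)
    have hD : 0 < det3 (P 0) (P (0+1)) (P (0+1+1)) :=
      hP 0 (0+1+1) (fin_add_two_ne hn 0) (fun h => fin_add_one_ne hn (0+1) h)
    have hz0' : (P (0+1) 0 - P 0 0) * d 1 = (P (0+1) 1 - P 0 1) * d 0 := by
      simp only [hlin] at hz0; linarith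
    have hz1' : (P (0+1+1) 0 - P (0+1) 0) * d 1 = (P (0+1+1) 1 - P (0+1) 1) * d 0 := by
      simp only [hlin] at hz1; linarith
    unfold det3 at hD
    have key0 : d 0 * ((P (0+1) 0 - P 0 0) * (P (0+1+1) 1 - P 0 1)
        - (P (0+1) 1 - P 0 1) * (P (0+1+1) 0 - P 0 0)) = 0 := by
      linear_combination (P (0+1+1) 0 - P (0+1) 0) * hz0' - (P (0+1) 0 - P 0 0) * hz1'
    have key1 : d 1 * ((P (0+1) 0 - P 0 0) * (P (0+1+1) 1 - P 0 1)
        - (P (0+1) 1 - P 0 1) * (P (0+1+1) 0 - P 0 0)) = 0 := by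
      linear_combination (P (0+1+1) 1 - P (0+1) 1) * hz0' - (P (0+1) 1 - P 0 1) * hz1'
    have hd0 : d 0 = 0 := by
      rcases mul_eq_zero.mp key0 with h | h
      · exact h
      · linarith
    have hd1 : d 1 = 0 := by
      rcases mul_eq_zero.mp key1 with h | h
      · exact h
      · linarith
    apply hd
    ext j
    fin_cases j
    · show d 0 = 0; exact hd0
    · show d 1 = 0; exact hd1
  obtain ⟨j₀, hj₀⟩ := hneg
  set S : Finset (Fin n) := Finset.univ.filter (fun j => lin j < 0) with hS
  have hSne : S.Nonempty := ⟨j₀, by simp [hS, hj₀]⟩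
  obtain ⟨i₀, hi₀S, hmin⟩ :=
    S.exists_min_image (fun j => det3 (P j) (P (j+1)) a / (-(lin j))) hSne
  have hi₀lin : lin i₀ < 0 := (Finset.mem_filter.mp hi₀S).2
  set T := det3 (P i₀) (P (i₀+1)) a / (-(lin i₀)) with hT
  have hTnn : 0 ≤ T := div_nonneg (det3_nonneg_hull hn hP i₀ ha) (by linarith)
  have hwall : ∀ j : Fin n, 0 ≤ det3 (P j) (P (j+1)) (a + T • d) := by
    intro j
    rw [det3_translate]
    show 0 ≤ det3 (P j) (P (j+1)) a + T * lin j
    by_cases hlj : lin j < 0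
    · have hjS : j ∈ S := by simp [hS, hlj]
      have := hmin j hjS
      -- T ≤ det_j a / (-lin j)
      have h2 : T * (-(lin j)) ≤ det3 (P j) (P (j+1)) a := by
        rw [← le_div_iff₀ (by linarith : (0:ℝ) < -(lin j))]
        exact this
      linarith
    · push_neg at hlj
      have := det3_nonneg_hull hn hP j ha
      nlinarith
  have hzero : det3 (P i₀) (P (i₀+1)) (a + T • d) = 0 := by
    rw [det3_translate]
    show det3 (P i₀) (P (i₀+1)) a + T * lin i₀ = 0
    have hln : lin i₀ ≠ 0 := ne_of_lt hi₀lin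
    rw [hT]
    rw [div_mul_eq_mul_div, mul_div_assoc, div_neg, div_self hln]
    ring
  refine ⟨T, hTnn, ?_, ?_⟩
  · exact Set.mem_iUnion.mpr ⟨i₀, mem_edge_of_det_eq hn hP i₀ hwall hzero⟩
  · intro had
    have h1 : 0 ≤ det3 (P i₀) (P (i₀+1)) a + lin i₀ := by
      have := det3_nonneg_hull hn hP i₀ had
      rw [show a + d = a + (1:ℝ) • d by rw [one_smul]] at this
      rw [det3_translate] at this
      have he : lin i₀ = (P (i₀+1) 0 - P i₀ 0) * d 1 - (P (i₀+1) 1 - P i₀ 1) * d 0 := rfl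
      linarith [this, he]
    rw [hT, le_div_iff₀ (by linarith : (0:ℝ) < -(lin i₀))]
    linarith

lemma edge_subset_hull {n : ℕ} [NeZero n] (P : Fin n → Pt) (i : Fin n) :
    segment ℝ (P i) (P (i+1)) ⊆ hull P :=
  (convex_convexHull ℝ _).segment_subset
    (subset_convexHull _ _ ⟨i, rfl⟩) (subset_convexHull _ _ ⟨i+1, rfl⟩)

lemma bdry_subset_hull {n : ℕ} [NeZero n] (P : Fin n → Pt) : bdry P ⊆ hull P := by
  intro x hx
  rcases Set.mem_iUnion.mp hx with ⟨i, hi⟩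
  exact edge_subset_hull P i hi

/-- Initialization: few boundary points whose hull contains `hull Q`. -/
lemma init {n : ℕ} (hn : 3 ≤ n) [NeZero n] {P : Fin n → Pt} (hP : CCW P)
    {m : ℕ} (hm : m < n) (Q : Fin m → Pt) (hQ : hull Q ⊆ hull P) :
    ∃ W : Finset Pt, W.card ≤ n - 1 ∧ (∀ x ∈ W, x ∈ bdry P) ∧
      hull Q ⊆ convexHull ℝ (W : Set Pt) := by
  classical
  rcases Nat.eq_zero_or_pos m with hm0 | hmpos
  · subst hm0
    refine ⟨{P 0}, ?_, ?_, ?_⟩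
    · simp; omega
    · intro x hx
      simp at hx
      subst hx
      exact Set.mem_iUnion.mpr ⟨0, left_mem_segment ℝ _ _⟩
    · have : Set.range Q = ∅ := Set.range_eq_empty Q
      rw [hull, this, convexHull_empty]
      exact Set.empty_subset _
  · have h0 : (0 : ℕ) < m := hmpos
    set z : Fin m := ⟨0, h0⟩ with hz
    set v : Pt := Q z with hv
    have hvhull : v ∈ hull P := hQ (subset_convexHull _ _ ⟨z, rfl⟩)
    have hQhull : ∀ s, Q s ∈ hull P := fun s => hQ (subset_convexHull _ _ ⟨s, rfl⟩)
    by_cases hall : ∀ s, Q s = v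
    · -- degenerate: a single point
      set d : Pt := EuclideanSpace.single 0 1 with hd
      have hdne : d ≠ 0 := by
        intro h
        have : d 0 = (0 : ℝ) := by rw [h]; rfl
        rw [hd] at this
        simp [EuclideanSpace.single_apply] at this
      obtain ⟨T₁, hT₁0, hw₁, _⟩ := exit_ray hn hP hvhull hdne
      obtain ⟨T₂, hT₂0, hw₂, _⟩ := exit_ray hn hP hvhull (neg_ne_zero.mpr hdne)
      set w₁ := v + T₁ • d
      set w₂ := v + T₂ • (-d)
      have hvseg : v ∈ segment ℝ w₂ w₁ := by
        rcases eq_or_lt_of_le (by linarith : (0:ℝ) ≤ T₁ + T₂) with hSS | hSS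
        · have hT1 : T₁ = 0 := by linarith
          have : w₁ = v := by show v + T₁ • d = v; rw [hT1]; simp
          rw [← this]
          exact right_mem_segment ℝ _ _
        · refine ⟨T₁ / (T₁+T₂), T₂ / (T₁+T₂), by positivity, by positivity, ?_, ?_⟩
          · field_simp
          · show (T₁/(T₁+T₂)) • (v + T₂ • (-d)) + (T₂/(T₁+T₂)) • (v + T₁ • d) = v
            match_scalars <;> (field_simp; try ring)
      refine ⟨{w₂, w₁}, ?_, ?_, ?_⟩
      · have : ({w₂, w₁} : Finset Pt).card ≤ 2 := Finset.card_insert_le _ _ |>.trans (by simp)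
        omega
      · intro x hx
        simp at hx
        rcases hx with h | h <;> subst h <;> assumption
      · apply convexHull_min
        · rintro _ ⟨s, rfl⟩
          rw [hall s, hv]
          have : segment ℝ w₂ w₁ ⊆ convexHull ℝ ({w₂, w₁} : Set Pt) :=
            (convex_convexHull ℝ _).segment_subset
              (subset_convexHull _ _ (by simp)) (subset_convexHull _ _ (by simp))
          have h2 : ((({w₂, w₁} : Finset Pt) : Set Pt)) = ({w₂, w₁} : Set Pt) := by simp
          rw [h2]
          exact this hvseg
        · exact convex_convexHull _ _
    · push_neg at hall
      obtain ⟨s₀, hs₀⟩ := hall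
      have hs₀ne : Q s₀ - v ≠ 0 := sub_ne_zero.mpr hs₀
      have hvne : v - Q s₀ ≠ 0 := sub_ne_zero.mpr (Ne.symm hs₀)
      obtain ⟨Tu, hTu0, hubd, _⟩ := exit_ray hn hP hvhull hvne
      set u : Pt := v + Tu • (v - Q s₀) with hu
      -- choose w s for each s
      have hws : ∀ s : Fin m, ∃ ws : Pt, ws ∈ bdry P ∧ (Q s = v → ws = u) ∧
          (Q s ≠ v → ∃ t : ℝ, 1 ≤ t ∧ ws = v + t • (Q s - v)) := by
        intro s
        by_cases hsv : Q s = v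
        · exact ⟨u, hubd, fun _ => rfl, fun h => absurd hsv h⟩
        · have hdne : Q s - v ≠ 0 := sub_ne_zero.mpr hsv
          obtain ⟨t, ht0, htbd, ht1⟩ := exit_ray hn hP hvhull hdne
          have h1t : 1 ≤ t := by
            apply ht1
            have : v + (Q s - v) = Q s := by abel
            rw [this]
            exact hQhull s
          exact ⟨v + t • (Q s - v), htbd, fun h => absurd h hsv, fun _ => ⟨t, h1t, rfl⟩⟩
      choose w hwbd hwv hwt using hws
      have hwz : w z = u := hwv z rfl
      set W : Finset Pt := insert u ((Finset.univ.erase z).image w) with hW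
      have hcard : W.card ≤ n - 1 := by
        have h1 : W.card ≤ ((Finset.univ.erase z).image w).card + 1 := Finset.card_insert_le _ _
        have h2 : ((Finset.univ.erase z).image w).card ≤ (Finset.univ.erase z).card :=
          Finset.card_image_le
        have h3 : (Finset.univ.erase z).card = m - 1 := by
          rw [Finset.card_erase_of_mem (Finset.mem_univ _)]
          simp
        omega
      have hubdW : ∀ x ∈ W, x ∈ bdry P := by
        intro x hx
        rw [hW] at hx
        rcases Finset.mem_insert.mp hx with h | h
        · subst h; exact hubd
        · rcases Finset.mem_image.mp h with ⟨s, _, rfl⟩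
          exact hwbd s
      -- v ∈ convexHull W
      have hs₀z : s₀ ≠ z := by
        intro h; rw [h] at hs₀; exact hs₀ rfl
      have hws₀W : w s₀ ∈ W := by
        rw [hW]
        exact Finset.mem_insert_of_mem
          (Finset.mem_image_of_mem w (Finset.mem_erase.mpr ⟨hs₀z, Finset.mem_univ _⟩))
      have huW : u ∈ W := by rw [hW]; exact Finset.mem_insert_self _ _
      obtain ⟨T₀, hT₀1, hws₀⟩ := hwt s₀ hs₀
      have hvconv : v ∈ convexHull ℝ (W : Set Pt) := by
        have hseg : v ∈ segment ℝ u (w s₀) := by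
          refine ⟨T₀ / (T₀ + Tu), Tu / (T₀ + Tu), by positivity, by positivity, ?_, ?_⟩
          · field_simp
          · rw [hws₀, hu]
            match_scalars <;> (field_simp; try ring)
        exact (convex_convexHull ℝ _).segment_subset
          (subset_convexHull _ _ huW) (subset_convexHull _ _ hws₀W) hseg
      refine ⟨W, hcard, hubdW, ?_⟩
      apply convexHull_min ?_ (convex_convexHull _ _)
      rintro _ ⟨s, rfl⟩
      by_cases hsv : Q s = v
      · rw [hsv]; exact hvconv
      · obtain ⟨t, ht1, hwseq⟩ := hwt s hsv
        have hsz : s ≠ z := by intro h; rw [h] at hsv; exact hsv rfl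
        have hwsW : w s ∈ W := by
          rw [hW]
          exact Finset.mem_insert_of_mem
            (Finset.mem_image_of_mem w (Finset.mem_erase.mpr ⟨hsz, Finset.mem_univ _⟩))
        have hseg : Q s ∈ segment ℝ v (w s) := by
          refine ⟨1 - 1/t, 1/t, by
            have : 1/t ≤ 1 := by
              rw [div_le_one (by linarith)]; linarith
            linarith, by positivity, by field_simp; ring, ?_⟩
          rw [hwseq]
          match_scalars <;> (field_simp; try ring)
        exact (convex_convexHull ℝ _).segment_subset hvconv
          (subset_convexHull _ _ hwsW) hseg

open Classical in
/-- Main normalization loop. -/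
lemma loop {n : ℕ} (hn : 3 ≤ n) [NeZero n] {P : Fin n → Pt} (hP : CCW P) (K : Set Pt) :
    ∀ fuel : ℕ, ∀ W : Finset Pt,
      (W.filter (fun x => ∀ j, x ≠ P j)).card * n + (n - 1 - W.card) ≤ fuel →
      W.card ≤ n - 1 →
      (∀ x ∈ W, ∃ j : Fin n, x ∈ segment ℝ (P j) (P (j+1))) →
      K ⊆ convexHull ℝ (W : Set Pt) →
      ∃ W' : Finset Pt, W'.card = n - 1 ∧
        (∀ x ∈ W', ∃ j : Fin n, x ∈ segment ℝ (P j) (P (j+1))) ∧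
        K ⊆ convexHull ℝ (W' : Set Pt) ∧
        (∀ x ∈ W', (∀ i, x ≠ P i) → ∀ j : Fin n, x ∈ segment ℝ (P j) (P (j+1)) →
          ∀ y ∈ W', y ≠ x → y ∉ segment ℝ (P j) (P (j+1))) := by
  classical
  intro fuel
  induction fuel with
  | zero =>
    intro W hfuel hcard hbd hK
    have hnv : (W.filter (fun x => ∀ j, x ≠ P j)).card = 0 := by
      by_contra h
      have : 1 ≤ (W.filter (fun x => ∀ j, x ≠ P j)).card := Nat.one_le_iff_ne_zero.mpr h
      nlinarith [this, hn]
    refine ⟨W, by omega, hbd, hK, ?_⟩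
    intro x hx hxnv j _ y _ _ _
    exfalso
    have : x ∈ W.filter (fun x => ∀ j, x ≠ P j) := Finset.mem_filter.mpr ⟨hx, hxnv⟩
    rw [Finset.card_eq_zero.mp hnv] at this
    exact absurd this (Finset.notMem_empty x)
  | succ fuel IH =>
    intro W hfuel hcard hbd hK
    set nvW := (W.filter (fun x => ∀ j, x ≠ P j)).card with hnvW
    by_cases hviol : ∃ x ∈ W, (∀ i, x ≠ P i) ∧ ∃ j : Fin n,
        x ∈ segment ℝ (P j) (P (j+1)) ∧ ∃ y ∈ W, y ≠ x ∧ y ∈ segment ℝ (P j) (P (j+1))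
    · -- A-step: merge an edge with ≥ 2 points
      obtain ⟨x, hxW, hxnv, j, hxseg, y, hyW, hyne, hyseg⟩ := hviol
      set E := segment ℝ (P j) (P (j+1)) with hE
      set W' := insert (P j) (insert (P (j+1)) (W.filter (fun z => z ∉ E))) with hW'
      have hPjW' : P j ∈ W' := Finset.mem_insert_self _ _
      have hPj1W' : P (j+1) ∈ W' := Finset.mem_insert_of_mem (Finset.mem_insert_self _ _)
      have hfsub : W.filter (fun z => z ∉ E) ⊆ (W.erase x).erase y := by
        intro z hz
        rcases Finset.mem_filter.mp hz with ⟨hzW, hzE⟩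
        refine Finset.mem_erase.mpr ⟨?_, Finset.mem_erase.mpr ⟨?_, hzW⟩⟩
        · intro h; subst h; exact hzE hyseg
        · intro h; subst h; exact hzE hxseg
      have hcf : (W.filter (fun z => z ∉ E)).card ≤ W.card - 2 := by
        have h1 := Finset.card_le_card hfsub
        have h2 : ((W.erase x).erase y).card = W.card - 1 - 1 := by
          rw [Finset.card_erase_of_mem (Finset.mem_erase.mpr ⟨hyne, hyW⟩),
            Finset.card_erase_of_mem hxW]
        omega
      have hW2 : 2 ≤ W.card :=
        Finset.one_lt_card.mpr ⟨x, hxW, y, hyW, Ne.symm hyne⟩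
      have hcard' : W'.card ≤ W.card := by
        have h1 : W'.card ≤ (W.filter (fun z => z ∉ E)).card + 2 := by
          refine (Finset.card_insert_le _ _).trans ?_
          have := Finset.card_insert_le (P (j+1)) (W.filter (fun z => z ∉ E))
          omega
        omega
      have hbd' : ∀ z ∈ W', ∃ i : Fin n, z ∈ segment ℝ (P i) (P (i+1)) := by
        intro z hz
        rcases Finset.mem_insert.mp hz with h | h
        · exact ⟨j, h ▸ left_mem_segment ℝ _ _⟩
        rcases Finset.mem_insert.mp h with h' | h'
        · exact ⟨j, h' ▸ right_mem_segment ℝ _ _⟩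
        · exact hbd z (Finset.mem_of_mem_filter z h')
      have hKsub : K ⊆ convexHull ℝ (W' : Set Pt) := by
        refine hK.trans (convexHull_min ?_ (convex_convexHull _ _))
        intro z hzW
        by_cases hzE : z ∈ E
        · have hseg : E ⊆ convexHull ℝ (W' : Set Pt) := by
            rw [hE]
            exact (convex_convexHull ℝ _).segment_subset
              (subset_convexHull _ _ hPjW') (subset_convexHull _ _ hPj1W')
          exact hseg hzE
        · exact subset_convexHull _ _ (Finset.mem_insert_of_mem
            (Finset.mem_insert_of_mem (Finset.mem_filter.mpr ⟨hzW, hzE⟩)))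
      have hnv' : (W'.filter (fun z => ∀ i, z ≠ P i)).card + 1 ≤ nvW := by
        have hsub : W'.filter (fun z => ∀ i, z ≠ P i) ⊆
            (W.filter (fun z => ∀ i, z ≠ P i)).erase x := by
          intro z hz
          rcases Finset.mem_filter.mp hz with ⟨hzW', hznv⟩
          rcases Finset.mem_insert.mp hzW' with h | h
          · exact absurd h (hznv j)
          rcases Finset.mem_insert.mp h with h' | h'
          · exact absurd h' (hznv (j+1))
          · rcases Finset.mem_filter.mp h' with ⟨hzW, hzE⟩
            refine Finset.mem_erase.mpr ⟨?_, Finset.mem_filter.mpr ⟨hzW, hznv⟩⟩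
            intro hzx; subst hzx; exact hzE hxseg
        have h1 := Finset.card_le_card hsub
        have hxmem : x ∈ W.filter (fun z => ∀ i, z ≠ P i) :=
          Finset.mem_filter.mpr ⟨hxW, hxnv⟩
        rw [Finset.card_erase_of_mem hxmem] at h1
        have : 1 ≤ nvW := by
          rw [hnvW]
          exact Finset.card_pos.mpr ⟨x, hxmem⟩
        omega
      refine IH W' ?_ (hcard'.trans hcard) hbd' hKsub
      have hm : (W'.filter (fun z => ∀ i, z ≠ P i)).card * n + n ≤ nvW * n := by
        calc (W'.filter (fun z => ∀ i, z ≠ P i)).card * n + n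
            = ((W'.filter (fun z => ∀ i, z ≠ P i)).card + 1) * n := by ring
          _ ≤ nvW * n := Nat.mul_le_mul_right n hnv'
      have hle : n - 1 - W'.card ≤ n - 1 := by omega
      omega
    · -- no violation
      by_cases hfull : W.card < n - 1
      · by_cases hnvx : ∃ x ∈ W, ∀ i, x ≠ P i
        · -- convert step
          obtain ⟨x₀, hx₀W, hx₀nv⟩ := hnvx
          obtain ⟨j₀, hx₀seg⟩ := hbd x₀ hx₀W
          set W' := insert (P j₀) (insert (P (j₀+1)) (W.erase x₀)) with hW'
          have hPjW' : P j₀ ∈ W' := Finset.mem_insert_self _ _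
          have hPj1W' : P (j₀+1) ∈ W' := Finset.mem_insert_of_mem (Finset.mem_insert_self _ _)
          have hcard' : W'.card ≤ W.card + 1 := by
            have h1 : W'.card ≤ (W.erase x₀).card + 2 := by
              refine (Finset.card_insert_le _ _).trans ?_
              have := Finset.card_insert_le (P (j₀+1)) (W.erase x₀)
              omega
            have h2 : (W.erase x₀).card = W.card - 1 := Finset.card_erase_of_mem hx₀W
            have : 1 ≤ W.card := Finset.card_pos.mpr ⟨x₀, hx₀W⟩
            omega
          have hbd' : ∀ z ∈ W', ∃ i : Fin n, z ∈ segment ℝ (P i) (P (i+1)) := by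
            intro z hz
            rcases Finset.mem_insert.mp hz with h | h
            · exact ⟨j₀, h ▸ left_mem_segment ℝ _ _⟩
            rcases Finset.mem_insert.mp h with h' | h'
            · exact ⟨j₀, h' ▸ right_mem_segment ℝ _ _⟩
            · exact hbd z (Finset.mem_of_mem_erase h')
          have hKsub : K ⊆ convexHull ℝ (W' : Set Pt) := by
            refine hK.trans (convexHull_min ?_ (convex_convexHull _ _))
            intro z hzW
            by_cases hzx : z = x₀
            · subst hzx
              have hseg : segment ℝ (P j₀) (P (j₀+1)) ⊆ convexHull ℝ (W' : Set Pt) :=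
                (convex_convexHull ℝ _).segment_subset
                  (subset_convexHull _ _ hPjW') (subset_convexHull _ _ hPj1W')
              exact hseg hx₀seg
            · exact subset_convexHull _ _ (Finset.mem_insert_of_mem
                (Finset.mem_insert_of_mem (Finset.mem_erase.mpr ⟨hzx, hzW⟩)))
          have hnv' : (W'.filter (fun z => ∀ i, z ≠ P i)).card + 1 ≤ nvW := by
            have hsub : W'.filter (fun z => ∀ i, z ≠ P i) ⊆
                (W.filter (fun z => ∀ i, z ≠ P i)).erase x₀ := by
              intro z hz
              rcases Finset.mem_filter.mp hz with ⟨hzW', hznv⟩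
              rcases Finset.mem_insert.mp hzW' with h | h
              · exact absurd h (hznv j₀)
              rcases Finset.mem_insert.mp h with h' | h'
              · exact absurd h' (hznv (j₀+1))
              · rcases Finset.mem_erase.mp h' with ⟨hzx, hzW⟩
                exact Finset.mem_erase.mpr ⟨hzx, Finset.mem_filter.mpr ⟨hzW, hznv⟩⟩
            have h1 := Finset.card_le_card hsub
            have hxmem : x₀ ∈ W.filter (fun z => ∀ i, z ≠ P i) :=
              Finset.mem_filter.mpr ⟨hx₀W, hx₀nv⟩
            rw [Finset.card_erase_of_mem hxmem] at h1
            have : 1 ≤ nvW := Finset.card_pos.mpr ⟨x₀, hxmem⟩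
            omega
          refine IH W' ?_ (by omega) hbd' hKsub
          have hm : (W'.filter (fun z => ∀ i, z ≠ P i)).card * n + n ≤ nvW * n := by
            calc (W'.filter (fun z => ∀ i, z ≠ P i)).card * n + n
                = ((W'.filter (fun z => ∀ i, z ≠ P i)).card + 1) * n := by ring
              _ ≤ nvW * n := Nat.mul_le_mul_right n hnv'
          have : n - 1 - W'.card ≤ n - 1 := by omega
          omega
        · -- insert a fresh vertex
          push_neg at hnvx
          have hvex : ∃ j : Fin n, P j ∉ W := by
            by_contra h
            push_neg at h
            have hsub : Finset.univ.image P ⊆ W := by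
              intro z hz
              rcases Finset.mem_image.mp hz with ⟨j, _, rfl⟩
              exact h j
            have : (Finset.univ.image P).card = n := by
              rw [Finset.card_image_of_injective _ (P_injective hn hP)]
              simp
            have := Finset.card_le_card hsub
            omega
          obtain ⟨j, hjW⟩ := hvex
          set W' := insert (P j) W with hW'
          have hcard' : W'.card = W.card + 1 := Finset.card_insert_of_notMem hjW
          have hbd' : ∀ z ∈ W', ∃ i : Fin n, z ∈ segment ℝ (P i) (P (i+1)) := by
            intro z hz
            rcases Finset.mem_insert.mp hz with h | h
            · exact ⟨j, h ▸ left_mem_segment ℝ _ _⟩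
            · exact hbd z h
          have hKsub : K ⊆ convexHull ℝ (W' : Set Pt) := by
            refine hK.trans (convexHull_mono ?_)
            intro z hz
            exact Finset.mem_insert_of_mem hz
          have hnv' : (W'.filter (fun z => ∀ i, z ≠ P i)).card ≤ nvW := by
            apply Finset.card_le_card
            intro z hz
            rcases Finset.mem_filter.mp hz with ⟨hzW', hznv⟩
            rcases Finset.mem_insert.mp hzW' with h | h
            · exact absurd h (hznv j)
            · exact Finset.mem_filter.mpr ⟨h, hznv⟩
          refine IH W' ?_ (by omega) hbd' hKsub
          have hm : (W'.filter (fun z => ∀ i, z ≠ P i)).card * n ≤ nvW * n :=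
            Nat.mul_le_mul_right n hnv'
          omega
      · -- done
        push_neg at hviol hfull
        refine ⟨W, by omega, hbd, hK, ?_⟩
        intro x hx hxnv j hxseg y hy hyne hyseg
        exact hviol x hx hxnv j hxseg y hy hyne hyseg

end S8

open S8 in
/-- For every `m`-gon `Q` contained in the convex `n`-gon `P` with
`m < n`, there is a maximal degenerate `(n-1)`-gon `Q'` interpolating between `Q`
and `P`. -/
theorem statement8 (n : ℕ) (hn : 3 ≤ n) [NeZero n] (P : Fin n → Pt) (hP : CCW P)
    (m : ℕ) (hm : m < n) (Q : Fin m → Pt) (hQ : hull Q ⊆ hull P) :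
    ∃ Q' : Fin (n - 1) → Pt, MaxDegen P Q' ∧ hull Q ⊆ hull Q' ∧ hull Q' ⊆ hull P := by
  classical
  obtain ⟨W₀, hc₀, hb₀, hK₀⟩ := init hn hP hm Q hQ
  have hb₀' : ∀ x ∈ W₀, ∃ j : Fin n, x ∈ segment ℝ (P j) (P (j+1)) := by
    intro x hx
    exact Set.mem_iUnion.mp (hb₀ x hx)
  obtain ⟨W, hWcard, hWbd, hWK, hWval⟩ :=
    loop hn hP (hull Q)
      ((W₀.filter (fun x => ∀ j, x ≠ P j)).card * n + (n - 1 - W₀.card))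
      W₀ le_rfl hc₀ hb₀' hK₀
  set e := W.equivFinOfCardEq hWcard with he
  set Q' : Fin (n-1) → Pt := fun k => ((e.symm k : W) : Pt) with hQ'
  have hinj : Function.Injective Q' := by
    intro k l h
    exact e.symm.injective (Subtype.coe_injective h)
  have hmemW : ∀ k, Q' k ∈ W := fun k => (e.symm k).2
  have hrange : Set.range Q' = (W : Set Pt) := by
    ext z
    constructor
    · rintro ⟨k, rfl⟩; exact hmemW k
    · intro hz
      exact ⟨e ⟨z, hz⟩, by simp [hQ']⟩
  refine ⟨Q', ⟨?_, ?_⟩, ?_, ?_⟩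
  · intro k
    obtain ⟨j, hj⟩ := hWbd _ (hmemW k)
    exact Set.mem_iUnion.mpr ⟨j, hj⟩
  · intro k
    by_cases hv : ∃ i, Q' k = P i
    · obtain ⟨i, hi⟩ := hv
      left
      refine ⟨i, hi, ?_⟩
      intro k' hk' h
      exact hk' (hinj (h.trans hi.symm))
    · push_neg at hv
      right
      obtain ⟨j, hj⟩ := hWbd _ (hmemW k)
      refine ⟨j, hj, hv, ?_⟩
      intro k' hk'
      exact hWval _ (hmemW k) hv j hj _ (hmemW k') (fun h => hk' (hinj h))
  · have h : hull Q' = convexHull ℝ (W : Set Pt) := by rw [hull, hrange]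
    rw [h]
    exact hWK
  · have h : hull Q' = convexHull ℝ (W : Set Pt) := by rw [hull, hrange]
    rw [h]
    apply convexHull_min _ (convex_convexHull _ _)
    intro x hx
    obtain ⟨j, hj⟩ := hWbd x hx
    exact edge_subset_hull P j hj


end
end

section
/- Let P be a convex n-gon oriented counterclockwise and let Q be a polygon maximal degenerate in P. If Q' is any polygon with co(Q) ⊆ co(Q') ⊆ co(P) for which there exists an m-gon R with m < n and co(Q') ⊆ co(R) ⊆ co(P), then co(Q) = co(Q'). -/
noncomputable section

namespace S9

local instance : DecidableEq Pt := Classical.decEq _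

open Fin.NatCast in
lemma fin_natCast_ne_zero {n : ℕ} [NeZero n] (hn : 3 ≤ n) {k : ℕ} (h0 : 0 < k) (hkn : k < n) :
    ((k : ℕ) : Fin n) ≠ 0 := by
  rw [Ne, Fin.natCast_eq_zero]
  intro h; have := Nat.le_of_dvd h0 h; omega

lemma fin_one_ne_zero' {n : ℕ} [NeZero n] (hn : 3 ≤ n) : (1 : Fin n) ≠ 0 := by
  have := fin_natCast_ne_zero hn (k := 1) one_pos (by omega); simpa using this

open Fin.NatCast in
lemma fin_two_ne_zero' {n : ℕ} [NeZero n] (hn : 3 ≤ n) : (1 + 1 : Fin n) ≠ 0 := by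
  have := fin_natCast_ne_zero hn (k := 2) (by norm_num) (by omega)
  rwa [Nat.cast_ofNat, ← one_add_one_eq_two] at this

lemma fin_add_one_ne {n : ℕ} [NeZero n] (hn : 3 ≤ n) (i : Fin n) : i + 1 ≠ i := by
  intro h
  have : i + 1 = i + 0 := by rw [h, add_zero]
  exact fin_one_ne_zero' hn (add_left_cancel this)

lemma fin_add_two_ne {n : ℕ} [NeZero n] (hn : 3 ≤ n) (i : Fin n) : i + 1 + 1 ≠ i := by
  intro h
  have : i + (1 + 1) = i + 0 := by rw [← add_assoc, h, add_zero]
  exact fin_two_ne_zero' hn (add_left_cancel this)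

lemma fin_sub_one_ne {n : ℕ} [NeZero n] (hn : 3 ≤ n) (i : Fin n) : i - 1 ≠ i := by
  intro h
  have : i - 1 + 1 = i + 1 := by rw [h]
  rw [sub_add_cancel] at this
  exact fin_add_one_ne hn i this.symm

lemma fin_sub_one_ne_add_one {n : ℕ} [NeZero n] (hn : 3 ≤ n) (i : Fin n) : i - 1 ≠ i + 1 := by
  intro h
  have : i - 1 + 1 = i + 1 + 1 := by rw [h]
  rw [sub_add_cancel] at this
  exact fin_add_two_ne hn i this.symm

lemma det3_self12 (a c : Pt) : det3 a a c = 0 := by unfold det3; ring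
lemma det3_self13 (a b : Pt) : det3 a b a = 0 := by unfold det3; ring
lemma det3_self23 (a b : Pt) : det3 a b b = 0 := by unfold det3; ring

lemma pt_sum_apply (t : Finset Pt) (w : Pt → ℝ) (j : Fin 2) :
    (∑ y ∈ t, w y • y) j = ∑ y ∈ t, w y * y j := by
  rw [WithLp.ofLp_sum, Finset.sum_apply]; rfl

lemma det3_sum (a b : Pt) (t : Finset Pt) (w : Pt → ℝ) (hw : ∑ y ∈ t, w y = 1) :
    det3 a b (∑ y ∈ t, w y • y) = ∑ y ∈ t, w y * det3 a b y := by
  have h0 := pt_sum_apply t w 0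
  have h1 := pt_sum_apply t w 1
  have hrhs : ∑ y ∈ t, w y * det3 a b y
      = (b 0 - a 0) * ∑ y ∈ t, w y * y 1 - (b 1 - a 1) * ∑ y ∈ t, w y * y 0
        - ((b 0 - a 0) * a 1 - (b 1 - a 1) * a 0) * ∑ y ∈ t, w y := by
    rw [Finset.mul_sum, Finset.mul_sum, Finset.mul_sum, ← Finset.sum_sub_distrib,
      ← Finset.sum_sub_distrib]
    exact Finset.sum_congr rfl fun y _ => by unfold det3; ring
  rw [hrhs, hw]
  unfold det3
  rw [h0, h1]; ring

lemma det3_comb2 (a b x y : Pt) (s : ℝ) :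
    det3 a b ((1 - s) • x + s • y) = (1 - s) * det3 a b x + s * det3 a b y := by
  unfold det3
  simp only [PiLp.add_apply, PiLp.smul_apply, smul_eq_mul]
  ring

lemma comb_le (t : Finset Pt) (w g : Pt → ℝ) (hw0 : ∀ y ∈ t, 0 ≤ w y)
    (hw1 : ∑ y ∈ t, w y = 1) :
    ∃ y ∈ t, w y ≠ 0 ∧ g y ≤ ∑ z ∈ t, w z * g z := by
  by_contra hc; push_neg at hc
  obtain ⟨y0, hy0, hwy0⟩ := Finset.exists_ne_zero_of_sum_ne_zero (by rw [hw1]; exact one_ne_zero)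
  have hlt : ∑ z ∈ t, w z * (∑ z' ∈ t, w z' * g z') < ∑ z ∈ t, w z * g z := by
    apply Finset.sum_lt_sum
    · intro z hz
      rcases eq_or_ne (w z) 0 with h | h
      · simp [h]
      · exact le_of_lt (mul_lt_mul_of_pos_left (hc z hz h) (lt_of_le_of_ne (hw0 z hz) (Ne.symm h)))
    · exact ⟨y0, hy0, mul_lt_mul_of_pos_left (hc y0 hy0 hwy0)
        (lt_of_le_of_ne (hw0 y0 hy0) (Ne.symm hwy0))⟩
  rw [← Finset.sum_mul, hw1, one_mul] at hlt
  exact lt_irrefl _ hlt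

lemma comb_ge (t : Finset Pt) (w g : Pt → ℝ) (hw0 : ∀ y ∈ t, 0 ≤ w y)
    (hw1 : ∑ y ∈ t, w y = 1) :
    ∃ y ∈ t, w y ≠ 0 ∧ ∑ z ∈ t, w z * g z ≤ g y := by
  obtain ⟨y, hy, hwne, hle⟩ := comb_le t w (fun z => -g z) hw0 hw1
  refine ⟨y, hy, hwne, ?_⟩
  have hsum : ∑ z ∈ t, w z * -g z = -∑ z ∈ t, w z * g z := by
    rw [← Finset.sum_neg_distrib]
    exact Finset.sum_congr rfl fun z _ => by ring
  rw [hsum] at hle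
  linarith


variable {n : ℕ} [NeZero n] {P : Fin n → Pt}

lemma ccw_nonneg (hP : CCW P) (i j : Fin n) : 0 ≤ det3 (P i) (P (i + 1)) (P j) := by
  by_cases h1 : j = i
  · rw [h1, det3_self13]
  by_cases h2 : j = i + 1
  · rw [h2, det3_self23]
  exact le_of_lt (hP i j h1 h2)

lemma ccw_zero (hP : CCW P) {i j : Fin n} (h : det3 (P i) (P (i + 1)) (P j) = 0) :
    j = i ∨ j = i + 1 := by
  by_contra hc; push_neg at hc
  exact absurd h (ne_of_gt (hP i j hc.1 hc.2))

lemma P_inj (hn : 3 ≤ n) (hP : CCW P) {i j : Fin n} (hij : i ≠ j) : P i ≠ P j := by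
  by_cases hji : j = i + 1
  · subst hji
    intro h
    have h1 : i + 1 + 1 ≠ i := fin_add_two_ne hn i
    have h2 : i + 1 + 1 ≠ i + 1 := fin_add_one_ne hn (i + 1)
    have := hP i (i + 1 + 1) h1 h2
    rw [← h, det3_self12] at this
    exact lt_irrefl _ this
  · intro h
    have := hP i j (fun hh => hij hh.symm) hji
    rw [← h, det3_self13] at this
    exact lt_irrefl _ this

lemma hull_rep {N : ℕ} (F : Fin N → Pt) {x : Pt} (hx : x ∈ hull F) :
    ∃ w : Pt → ℝ, (∀ y ∈ Finset.image F Finset.univ, 0 ≤ w y) ∧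
      ∑ y ∈ Finset.image F Finset.univ, w y = 1 ∧
      ∑ y ∈ Finset.image F Finset.univ, w y • y = x := by
  have hco : (↑(Finset.image F Finset.univ) : Set Pt) = Set.range F := by simp
  rw [hull, ← hco, Finset.mem_convexHull'] at hx
  exact hx

lemma edge_nonneg (hP : CCW P) {x : Pt} (hx : x ∈ hull P) (i : Fin n) :
    0 ≤ det3 (P i) (P (i + 1)) x := by
  obtain ⟨w, hw0, hw1, hwx⟩ := hull_rep P hx
  rw [← hwx, det3_sum _ _ _ _ hw1]
  apply Finset.sum_nonneg
  intro y hy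
  obtain ⟨j, _, rfl⟩ := Finset.mem_image.mp hy
  exact mul_nonneg (hw0 _ hy) (ccw_nonneg hP i j)

lemma mem_segment_prm {x y z : Pt} (h : z ∈ segment ℝ x y) :
    ∃ s : ℝ, 0 ≤ s ∧ s ≤ 1 ∧ z = (1 - s) • x + s • y := by
  obtain ⟨a, b, ha, hb, hab, heq⟩ := h
  exact ⟨b, hb, by linarith, by rw [show (1:ℝ) - b = a by linarith, heq]⟩

lemma prm_mem_segment {x y z : Pt} {s : ℝ} (h0 : 0 ≤ s) (h1 : s ≤ 1)
    (h : z = (1 - s) • x + s • y) : z ∈ segment ℝ x y :=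
  ⟨1 - s, s, by linarith, h0, by ring, h.symm⟩

lemma edge_zero_mem (hn : 3 ≤ n) (hP : CCW P) {x : Pt} (hx : x ∈ hull P) {i : Fin n}
    (hz : det3 (P i) (P (i + 1)) x = 0) : x ∈ segment ℝ (P i) (P (i + 1)) := by
  classical
  obtain ⟨w, hw0, hw1, hwx⟩ := hull_rep P hx
  set tP := Finset.image P Finset.univ with htP
  have hzs : ∑ y ∈ tP, w y * det3 (P i) (P (i + 1)) y = 0 := by
    rw [← det3_sum _ _ _ _ hw1, hwx, hz]
  have hterms : ∀ y ∈ tP, w y * det3 (P i) (P (i + 1)) y = 0 := by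
    rw [Finset.sum_eq_zero_iff_of_nonneg] at hzs
    · exact hzs
    · intro y hy
      obtain ⟨j, _, rfl⟩ := Finset.mem_image.mp hy
      exact mul_nonneg (hw0 _ hy) (ccw_nonneg hP i j)
  have hsupp : ∀ y ∈ tP, w y ≠ 0 → y = P i ∨ y = P (i + 1) := by
    intro y hy hwy
    obtain ⟨j, _, rfl⟩ := Finset.mem_image.mp hy
    have hdz : det3 (P i) (P (i + 1)) (P j) = 0 := by
      rcases mul_eq_zero.mp (hterms _ hy) with h | h
      · exact absurd h hwy
      · exact h
    rcases ccw_zero hP hdz with h | h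
    · exact Or.inl (congrArg P h)
    · exact Or.inr (congrArg P h)
  have hPne : P i ≠ P (i + 1) := P_inj hn hP (Ne.symm (fin_add_one_ne hn i))
  set s2 : Finset Pt := insert (P i) {P (i + 1)} with hs2
  have hsub : s2 ⊆ tP := by
    intro y hy
    rw [hs2, Finset.mem_insert, Finset.mem_singleton] at hy
    rcases hy with h | h <;> (rw [h]; exact Finset.mem_image.mpr ⟨_, Finset.mem_univ _, rfl⟩)
  have hx2 : ∑ y ∈ s2, w y • y = x := by
    rw [← hwx]
    apply Finset.sum_subset hsub
    intro y hy hns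
    rcases eq_or_ne (w y) 0 with h | h
    · rw [h, zero_smul]
    · exfalso; apply hns
      rcases hsupp y hy h with h' | h' <;> simp [hs2, h']
  have hw2 : ∑ y ∈ s2, w y = 1 := by
    rw [← hw1]
    apply Finset.sum_subset hsub
    intro y hy hns
    rcases eq_or_ne (w y) 0 with h | h
    · exact h
    · exfalso; apply hns
      rcases hsupp y hy h with h' | h' <;> simp [hs2, h']
  have hnotmem : P i ∉ ({P (i + 1)} : Finset Pt) := by simp [hPne]
  rw [hs2, Finset.sum_insert hnotmem, Finset.sum_singleton] at hx2
  rw [hs2, Finset.sum_insert hnotmem, Finset.sum_singleton] at hw2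
  exact ⟨w (P i), w (P (i + 1)), hw0 _ (hsub (by simp [hs2])), hw0 _ (hsub (by simp [hs2])),
    hw2, hx2⟩

lemma edge_fzero {x : Pt} {i : Fin n} (h : x ∈ segment ℝ (P i) (P (i + 1))) :
    det3 (P i) (P (i + 1)) x = 0 := by
  obtain ⟨s, _, _, hx⟩ := mem_segment_prm h
  rw [hx, det3_comb2, det3_self13, det3_self23]; ring

lemma base_pos (hn : 3 ≤ n) (hP : CCW P) (i : Fin n) :
    0 < det3 (P (i - 1)) (P i) (P (i + 1)) := by
  have e1 : i - 1 + 1 = i := sub_add_cancel i 1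
  have h1 : i + 1 ≠ i - 1 := Ne.symm (fin_sub_one_ne_add_one hn i)
  have h2 : i + 1 ≠ i - 1 + 1 := by rw [e1]; exact fin_add_one_ne hn i
  have := hP (i - 1) (i + 1) h1 h2
  rwa [e1] at this

lemma prm_val {i : Fin n} {x : Pt} {s : ℝ} (h : x = (1 - s) • P i + s • P (i + 1)) :
    det3 (P (i - 1)) (P i) x = s * det3 (P (i - 1)) (P i) (P (i + 1)) := by
  rw [h, det3_comb2, det3_self23]; ring

lemma prm_param_eq (hn : 3 ≤ n) (hP : CCW P) {i : Fin n} {x : Pt} {s s' : ℝ}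
    (h : x = (1 - s) • P i + s • P (i + 1)) (h' : x = (1 - s') • P i + s' • P (i + 1)) :
    s = s' := by
  have v1 := prm_val h
  have v2 := prm_val h'
  rw [v1] at v2
  exact mul_right_cancel₀ (ne_of_gt (base_pos hn hP i)) v2

lemma edge_inter (hn : 3 ≤ n) (hP : CCW P) {i j : Fin n} {x : Pt} (hij : i ≠ j)
    (hxi : x ∈ segment ℝ (P i) (P (i + 1)))
    (hxj : x ∈ segment ℝ (P j) (P (j + 1))) :
    (x = P i ∧ i = j + 1) ∨ (x = P (i + 1) ∧ j = i + 1) := by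
  obtain ⟨s, hs0, hs1, hx⟩ := mem_segment_prm hxi
  have hfz : det3 (P j) (P (j + 1)) x = 0 := edge_fzero hxj
  rw [hx, det3_comb2] at hfz
  have hni : 0 ≤ det3 (P j) (P (j + 1)) (P i) := ccw_nonneg hP j i
  have hni1 : 0 ≤ det3 (P j) (P (j + 1)) (P (i + 1)) := ccw_nonneg hP j (i + 1)
  have ht1 : (1 - s) * det3 (P j) (P (j + 1)) (P i) = 0 := by nlinarith
  have ht2 : s * det3 (P j) (P (j + 1)) (P (i + 1)) = 0 := by nlinarith
  rcases eq_or_lt_of_le hni with hz1 | hp1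
  · -- det3 (P j) (P (j+1)) (P i) = 0 : i = j ∨ i = j + 1; i ≠ j so i = j + 1
    have hij1 : i = j + 1 := by
      rcases ccw_zero hP hz1.symm with h | h
      · exact absurd h hij
      · exact h
    -- then det3 (P j) (P (j+1)) (P (i+1)) = det3 at j+1+1 > 0
    have hpos : 0 < det3 (P j) (P (j + 1)) (P (i + 1)) := by
      apply hP j (i + 1)
      · rw [hij1]; exact fin_add_two_ne hn j
      · rw [hij1]; exact fin_add_one_ne hn (j + 1)
    have hs : s = 0 := by
      rcases mul_eq_zero.mp ht2 with h | h
      · exact h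
      · exact absurd h (ne_of_gt hpos)
    left
    constructor
    · rw [hx, hs]; simp
    · exact hij1
  · have hs : s = 1 := by
      rcases mul_eq_zero.mp ht1 with h | h
      · linarith
      · exact absurd h (ne_of_gt hp1)
    have hxe : x = P (i + 1) := by rw [hx, hs]; simp
    have hz2 : det3 (P j) (P (j + 1)) (P (i + 1)) = 0 := by
      rcases mul_eq_zero.mp ht2 with h | h
      · rw [hs] at h; norm_num at h
      · exact h
    rcases ccw_zero hP hz2 with h | h
    · exact Or.inr ⟨hxe, h.symm⟩
    · exfalso; exact hij (add_right_cancel h)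
  
lemma vertex_extreme (hn : 3 ≤ n) (hP : CCW P) {N : ℕ} {F : Fin N → Pt}
    (hFP : hull F ⊆ hull P) {i : Fin n} (hx : P i ∈ hull F) : P i ∈ Set.range F := by
  classical
  obtain ⟨w, hw0, hw1, hwx⟩ := hull_rep F hx
  set tF := Finset.image F Finset.univ with htF
  have hmemP : ∀ y ∈ tF, y ∈ hull P := by
    intro y hy
    obtain ⟨j, _, rfl⟩ := Finset.mem_image.mp hy
    exact hFP (subset_convexHull ℝ _ ⟨j, rfl⟩)
  have e1 : i - 1 + 1 = i := sub_add_cancel i 1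
  have hz1 : ∑ y ∈ tF, w y * det3 (P (i - 1)) (P i) y = 0 := by
    have : det3 (P (i - 1)) (P i) (P i) = 0 := det3_self23 _ _
    rw [← det3_sum _ _ _ _ hw1, hwx, this]
  have hz2 : ∑ y ∈ tF, w y * det3 (P i) (P (i + 1)) y = 0 := by
    have : det3 (P i) (P (i + 1)) (P i) = 0 := det3_self13 _ _
    rw [← det3_sum _ _ _ _ hw1, hwx, this]
  have hterms1 : ∀ y ∈ tF, w y * det3 (P (i - 1)) (P i) y = 0 := by
    rw [Finset.sum_eq_zero_iff_of_nonneg] at hz1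
    · exact hz1
    · intro y hy
      have := edge_nonneg hP (hmemP y hy) (i - 1)
      rw [e1] at this
      exact mul_nonneg (hw0 _ hy) this
  have hterms2 : ∀ y ∈ tF, w y * det3 (P i) (P (i + 1)) y = 0 := by
    rw [Finset.sum_eq_zero_iff_of_nonneg] at hz2
    · exact hz2
    · exact fun y hy => mul_nonneg (hw0 _ hy) (edge_nonneg hP (hmemP y hy) i)
  obtain ⟨y0, hy0, hwy0⟩ := Finset.exists_ne_zero_of_sum_ne_zero (by rw [hw1]; exact one_ne_zero)
  have hd1 : det3 (P (i - 1)) (P i) y0 = 0 := by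
    rcases mul_eq_zero.mp (hterms1 _ hy0) with h | h
    · exact absurd h hwy0
    · exact h
  have hd2 : det3 (P i) (P (i + 1)) y0 = 0 := by
    rcases mul_eq_zero.mp (hterms2 _ hy0) with h | h
    · exact absurd h hwy0
    · exact h
  have hm1 : y0 ∈ segment ℝ (P (i - 1)) (P (i - 1 + 1)) := by
    apply edge_zero_mem hn hP (hmemP _ hy0)
    rw [e1]; exact hd1
  have hm2 : y0 ∈ segment ℝ (P i) (P (i + 1)) := edge_zero_mem hn hP (hmemP _ hy0) hd2
  have hii : i - 1 ≠ i := fin_sub_one_ne hn i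
  rcases edge_inter hn hP hii hm1 hm2 with ⟨_, habs⟩ | ⟨hy, _⟩
  · exfalso
    have : i - 1 + 1 = i + 1 + 1 := by rw [habs]
    rw [e1] at this
    exact fin_add_two_ne hn i this.symm
  · rw [e1] at hy
    obtain ⟨j, _, hj⟩ := Finset.mem_image.mp hy0
    exact ⟨j, by rw [hj, hy]⟩

end S9

/-- A maximal degenerate polygon `Q` in `P` has the maximality
property: any degenerately-contained interpolating polygon `Q'` between `Q` and `P`
has the same convex hull as `Q`. -/
theorem statement9 (n : ℕ) (hn : 3 ≤ n) [NeZero n] (P : Fin n → Pt) (hP : CCW P)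
    (Q : Fin (n - 1) → Pt) (hQ : MaxDegen P Q)
    (N : ℕ) (Q' : Fin N → Pt)
    (h1 : hull Q ⊆ hull Q') (h2 : hull Q' ⊆ hull P)
    (hdeg : ∃ m : ℕ, m < n ∧ ∃ R : Fin m → Pt, hull Q' ⊆ hull R ∧ hull R ⊆ hull P) :
    hull Q = hull Q' := by
  classical
  obtain ⟨m, hm, R, hQ'R, hRP⟩ := hdeg
  have hQhull : ∀ k, Q k ∈ hull R := fun k => hQ'R (h1 (subset_convexHull ℝ _ ⟨k, rfl⟩))
  have hRmemP : ∀ y : Pt, y ∈ Set.range R → y ∈ hull P := fun y hy =>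
    hRP (subset_convexHull ℝ _ hy)
  have key : ∀ k : Fin (n-1), ∃ (i : Fin n) (cc vv : Pt) (su squ sv : ℝ),
      cc ∈ Set.range R ∧ vv ∈ Set.range R ∧
      ((Q k = P i ∧ cc = Q k ∧ vv = Q k ∧ ∀ k', k' ≠ k → Q k' ≠ P i) ∨
       (cc = (1 - su) • P i + su • P (i+1) ∧ Q k = (1 - squ) • P i + squ • P (i+1) ∧
        vv = (1 - sv) • P i + sv • P (i+1) ∧
        0 ≤ su ∧ su ≤ squ ∧ squ ≤ sv ∧ sv ≤ 1 ∧ 0 < squ ∧ squ < 1 ∧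
        ∀ k', k' ≠ k → Q k' ∉ segment ℝ (P i) (P (i+1)))) := by
    intro k
    rcases hQ.2 k with ⟨i, hqi, huniq⟩ | ⟨i, hseg, hnv, hexcl⟩
    · have hmem : Q k ∈ Set.range R := by
        rw [hqi]
        exact S9.vertex_extreme hn hP hRP (hqi ▸ hQhull k)
      exact ⟨i, Q k, Q k, 0, 0, 0, hmem, hmem, Or.inl ⟨hqi, rfl, rfl, huniq⟩⟩
    · obtain ⟨w, hw0, hw1, hwx⟩ := S9.hull_rep R (hQhull k)
      set tR := @Finset.image _ _ S9.instDecidableEqPt R Finset.univ with htR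
      have hmemrange : ∀ y ∈ tR, y ∈ Set.range R := by
        intro y hy; letI := S9.instDecidableEqPt; obtain ⟨j, _, rfl⟩ := Finset.mem_image.mp hy; exact ⟨j, rfl⟩
      have hfz : det3 (P i) (P (i+1)) (Q k) = 0 := S9.edge_fzero hseg
      have hzs : ∑ y ∈ tR, w y * det3 (P i) (P (i+1)) y = 0 := by
        rw [← S9.det3_sum _ _ _ _ hw1, hwx, hfz]
      have hterms : ∀ y ∈ tR, w y * det3 (P i) (P (i+1)) y = 0 := by
        rw [Finset.sum_eq_zero_iff_of_nonneg] at hzs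
        · exact hzs
        · exact fun y hy => mul_nonneg (hw0 _ hy)
            (S9.edge_nonneg hP (hRmemP y (hmemrange y hy)) i)
      have hsegmem : ∀ y ∈ tR, w y ≠ 0 → y ∈ segment ℝ (P i) (P (i+1)) := by
        intro y hy hwy
        have hdz : det3 (P i) (P (i+1)) y = 0 := by
          rcases mul_eq_zero.mp (hterms _ hy) with h | h
          · exact absurd h hwy
          · exact h
        exact S9.edge_zero_mem hn hP (hRmemP y (hmemrange y hy)) hdz
      have hgq : ∑ z ∈ tR, w z * det3 (P (i-1)) (P i) z = det3 (P (i-1)) (P i) (Q k) := by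
        rw [← S9.det3_sum _ _ _ _ hw1, hwx]
      obtain ⟨squ, hsq0, hsq1, hqpr⟩ := S9.mem_segment_prm hseg
      obtain ⟨u, hu, hwu, hule⟩ := S9.comb_le tR w (fun y => det3 (P (i-1)) (P i) y) hw0 hw1
      obtain ⟨v, hv, hwv, hvge⟩ := S9.comb_ge tR w (fun y => det3 (P (i-1)) (P i) y) hw0 hw1
      obtain ⟨su, hsu0, hsu1, hupr⟩ := S9.mem_segment_prm (hsegmem u hu hwu)
      obtain ⟨sv, hsv0, hsv1, hvpr⟩ := S9.mem_segment_prm (hsegmem v hv hwv)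

      rw [hgq] at hule hvge
      have hC := S9.base_pos hn hP i
      have husq : su ≤ squ := by
        rw [S9.prm_val (P := P) hupr, S9.prm_val (P := P) hqpr] at hule
        exact le_of_mul_le_mul_right hule hC
      have hsqv : squ ≤ sv := by
        rw [S9.prm_val (P := P) hvpr, S9.prm_val (P := P) hqpr] at hvge
        exact le_of_mul_le_mul_right hvge hC
      have hsq0' : 0 < squ := by
        rcases lt_or_eq_of_le hsq0 with h | h
        · exact h
        · exact absurd (by rw [hqpr, ← h]; simp) (hnv i)
      have hsq1' : squ < 1 := by
        rcases lt_or_eq_of_le hsq1 with h | h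
        · exact h
        · exact absurd (by rw [hqpr, h]; simp) (hnv (i+1))
      exact ⟨i, u, v, su, squ, sv, hmemrange u hu, hmemrange v hv,
        Or.inr ⟨hupr, hqpr, hvpr, hsu0, husq, hsqv, hsv1, hsq0', hsq1', hexcl⟩⟩
  choose e cf vf su squ sv hcR hvR hcase using key
  have hcinj : Function.Injective cf := by
    intro k k' hckk'
    by_contra hkk'
    have hkk : k' ≠ k := fun h => hkk' h.symm
    rcases hcase k with ⟨ha1, hc1, hv1, hu1⟩ |
      ⟨hc1, hq1, hv1, hsu01, husq1, hsqv1, hsv11, hsq01, hsq11, hex1⟩ <;>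
      rcases hcase k' with ⟨ha2, hc2, hv2, hu2⟩ |
        ⟨hc2, hq2, hv2, hsu02, husq2, hsqv2, hsv12, hsq02, hsq12, hex2⟩
    · exact hu1 k' hkk (by rw [← hc2, ← hckk', hc1, ha1])
    · apply hex2 k (fun h => hkk' h)
      rw [show Q k = cf k' from by rw [← hckk', hc1]]
      exact S9.prm_mem_segment hsu02 (le_trans husq2 (le_trans hsqv2 hsv12)) hc2
    · apply hex1 k' hkk
      rw [show Q k' = cf k from by rw [hckk', hc2]]
      exact S9.prm_mem_segment hsu01 (le_trans husq1 (le_trans hsqv1 hsv11)) hc1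
    · by_cases hii : e k' = e k
      · apply hex1 k' hkk
        rw [hii] at hq2
        exact S9.prm_mem_segment (le_of_lt hsq02) (le_of_lt hsq12) hq2
      · have hx1 : cf k ∈ segment ℝ (P (e k)) (P (e k + 1)) :=
          S9.prm_mem_segment hsu01 (le_trans husq1 (le_trans hsqv1 hsv11)) hc1
        have hx2 : cf k ∈ segment ℝ (P (e k')) (P (e k' + 1)) := by
          rw [hckk']
          exact S9.prm_mem_segment hsu02 (le_trans husq2 (le_trans hsqv2 hsv12)) hc2
        rcases S9.edge_inter hn hP (fun h => hii h.symm) hx1 hx2 with ⟨hxp, hje⟩ | ⟨hxp, hje⟩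
        · have : su k' = 1 := S9.prm_param_eq hn hP hc2 (by rw [← hckk', hxp, hje]; simp)
          linarith
        · have : su k = 1 := S9.prm_param_eq hn hP hc1 (by rw [hxp]; simp)
          linarith
  have hcrange : Set.range cf = Set.range R := by
    apply Set.eq_of_subset_of_ncard_le (Set.range_subset_iff.mpr hcR) ?_ (Set.finite_range R)
    have hle1 : (Set.range R).ncard ≤ m := by
      rw [← Set.image_univ]
      calc (R '' Set.univ).ncard ≤ (Set.univ : Set (Fin m)).ncard :=
            Set.ncard_image_le Set.finite_univ
        _ = m := by rw [Set.ncard_univ]; simp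
    have heq1 : (Set.range cf).ncard = n - 1 := by
      rw [← Set.image_univ, Set.ncard_image_of_injective _ hcinj, Set.ncard_univ]
      simp
    omega
  by_cases hfat : ∃ i : Fin n, ∃ k, e k = i ∧ cf k ≠ vf k
  · exfalso
    have hstep : ∀ i : Fin n, (∃ k, e k = i ∧ cf k ≠ vf k) →
        (∃ k', e k' = i + 1 ∧ cf k' ≠ vf k') := by
      rintro i ⟨k, hek, hne⟩
      subst hek
      rcases hcase k with ⟨ha1, hc1, hv1, hu1⟩ |
        ⟨hc1, hq1, hv1, hsu01, husq1, hsqv1, hsv11, hsq01, hsq11, hex1⟩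
      · exact absurd (hc1.trans hv1.symm) hne
      · have hvr : vf k ∈ Set.range cf := by rw [hcrange]; exact hvR k
        obtain ⟨k', hk'⟩ := hvr
        rcases hcase k' with ⟨ha2, hc2, hv2, hu2⟩ |
          ⟨hc2, hq2, hv2, hsu02, husq2, hsqv2, hsv12, hsq02, hsq12, hex2⟩
        · by_cases hkk : k' = k
          · subst hkk
            have : squ k' = 0 := S9.prm_param_eq hn hP hq1 (by rw [ha2]; simp)
            linarith
          · exfalso
            apply hex1 k' hkk
            rw [show Q k' = vf k from by rw [← hc2, hk']]
            exact S9.prm_mem_segment (le_trans (le_of_lt hsq01) hsqv1) hsv11 hv1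
        · by_cases hii : e k' = e k
          · by_cases hkk : k' = k
            · subst hkk; exact absurd hk' hne
            · exfalso
              apply hex1 k' hkk
              rw [← hii]
              exact S9.prm_mem_segment (le_of_lt hsq02) (le_of_lt hsq12) hq2
          · have hx1 : vf k ∈ segment ℝ (P (e k)) (P (e k + 1)) :=
              S9.prm_mem_segment (le_trans (le_of_lt hsq01) hsqv1) hsv11 hv1
            have hx2 : vf k ∈ segment ℝ (P (e k')) (P (e k' + 1)) := by
              rw [← hk']
              exact S9.prm_mem_segment hsu02 (le_trans husq2 (le_trans hsqv2 hsv12)) hc2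
            rcases S9.edge_inter hn hP (fun h => hii h.symm) hx1 hx2 with
              ⟨hxp, hje⟩ | ⟨hxp, hje⟩
            · have : sv k = 0 := S9.prm_param_eq hn hP hv1 (by rw [hxp]; simp)
              linarith
            · have hsu'0 : su k' = 0 :=
                S9.prm_param_eq hn hP hc2 (by rw [hk', hxp, hje]; simp)
              refine ⟨k', hje, ?_⟩
              intro heq
              have : su k' = sv k' := S9.prm_param_eq hn hP hc2 (by rw [heq]; exact hv2)
              linarith
    obtain ⟨i0, hfat0⟩ := hfat
    open Fin.NatCast in
    have hall : ∀ t : ℕ, ∃ k, e k = i0 + (t : Fin n) ∧ cf k ≠ vf k := by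
      intro t
      induction t with
      | zero => simpa using hfat0
      | succ t ih =>
        have h2 := hstep _ ih
        have hcast : ((t + 1 : ℕ) : Fin n) = ((t : ℕ) : Fin n) + 1 := by push_cast; ring
        rwa [hcast, ← add_assoc]
    have hsurj : ∀ j : Fin n, ∃ k, e k = j := by
      intro j
      obtain ⟨k, hk, _⟩ := hall ((j - i0).val)
      refine ⟨k, ?_⟩
      rwa [Fin.cast_val_eq_self, show i0 + (j - i0) = j by abel] at hk
    choose g hg using hsurj
    have hginj : Function.Injective g := fun a b hab => by rw [← hg a, ← hg b, hab]
    have hcard := Fintype.card_le_of_injective g hginj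
    simp only [Fintype.card_fin] at hcard
    omega
  · push_neg at hfat
    have hcv : ∀ k, cf k = vf k := fun k => hfat (e k) k rfl
    have hcq : ∀ k, cf k = Q k := by
      intro k
      rcases hcase k with ⟨_, hc1, _, _⟩ |
        ⟨hc1, hq1, hv1, hsu01, husq1, hsqv1, _, _, _, _⟩
      · exact hc1
      · have hone : su k = sv k := S9.prm_param_eq hn hP hc1 (by rw [hcv k]; exact hv1)
        have htwo : su k = squ k := le_antisymm husq1 (by rw [hone]; exact hsqv1)
        rw [hc1, htwo, ← hq1]
    have hrq : Set.range cf = Set.range Q := by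
      have : cf = Q := funext hcq
      rw [this]
    have hhull : hull R = hull Q := by
      unfold hull
      rw [← hcrange, hrq]
    exact Set.Subset.antisymm h1 (hhull ▸ hQ'R)


end
end

section
/- Let P be an n-gon and N ∈ ℕ. The set of all n-gons attainable from P in at most N pull-in moves is a compact subset of (ℝ²)^n. -/
noncomputable section

/-- recursive characterization of chains -/
def ChainAux {n : ℕ} (R : (Fin n → Pt) → (Fin n → Pt) → Prop) (P : Fin n → Pt) :
    ℕ → (Fin n → Pt) → Prop
  | 0, P' => P' = P
  | m + 1, P' => ∃ Q, ChainAux R P m Q ∧ R Q P'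

lemma moveChain_iff_chainAux {n : ℕ} (R : (Fin n → Pt) → (Fin n → Pt) → Prop)
    (m : ℕ) (P P' : Fin n → Pt) : MoveChain R m P P' ↔ ChainAux R P m P' := by
  induction m generalizing P' with
  | zero =>
    constructor
    · rintro ⟨Q, h0, hl, -⟩
      simpa [ChainAux, ← h0, ← hl] using rfl
    · intro h
      exact ⟨fun _ => P, rfl, h.symm, fun s => s.elim0⟩
  | succ m ih =>
    constructor
    · rintro ⟨Q, h0, hl, hs⟩
      refine ⟨Q (Fin.last m).castSucc, (ih _).mp ⟨Q ∘ Fin.castSucc, by simpa using h0, rfl, ?_⟩, ?_⟩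
      · intro s
        have := hs s.castSucc
        rw [Fin.succ_castSucc] at this; exact this
      · have := hs (Fin.last m)
        rwa [Fin.succ_last, hl] at this
    · rintro ⟨Mid, hc, hR⟩
      obtain ⟨Q', h0, hl, hs⟩ := (ih Mid).mpr hc
      refine ⟨Fin.snoc Q' P', ?_, ?_, ?_⟩
      · have : (0 : Fin (m + 2)) = Fin.castSucc 0 := rfl
        rw [this, Fin.snoc_castSucc, h0]
      · simp
      · intro s
        rcases Fin.eq_castSucc_or_eq_last s with ⟨s', rfl⟩ | rfl
        · 
          have e1 : (Fin.snoc Q' P' : Fin (m+2) → _) s'.castSucc.castSucc = Q' s'.castSucc :=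
            Fin.snoc_castSucc ..
          have e2 : (Fin.snoc Q' P' : Fin (m+2) → _) s'.castSucc.succ = Q' s'.succ := by
            rw [Fin.succ_castSucc]; exact Fin.snoc_castSucc ..
          rw [e1, e2]; exact hs s'
        · have e1 : (Fin.snoc Q' P' : Fin (m+2) → _) (Fin.last m).castSucc = Q' (Fin.last m) :=
            Fin.snoc_castSucc ..
          have e2 : (Fin.snoc Q' P' : Fin (m+2) → _) (Fin.last m).succ = P' := by
            rw [Fin.succ_last]; exact Fin.snoc_last ..
          rw [e1, e2, hl]; exact hR

/-- One pull-in step with parameters. -/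
def pstep {n : ℕ} (ij : Fin n × Fin n) (t : ℝ) (Q : Fin n → Pt) : Fin n → Pt :=
  Function.update Q ij.1 ((1 - t) • Q ij.1 + t • Q ij.2)

def chainMap {n : ℕ} (P : Fin n → Pt) :
    (m : ℕ) → (Fin m → Fin n × Fin n) → (Fin m → ℝ) → (Fin n → Pt)
  | 0, _, _ => P
  | m + 1, σ, t => pstep (σ (Fin.last m)) (t (Fin.last m))
      (chainMap P m (σ ∘ Fin.castSucc) (t ∘ Fin.castSucc))

lemma chainMap_continuous {n : ℕ} (P : Fin n → Pt) (m : ℕ) (σ : Fin m → Fin n × Fin n) :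
    Continuous (fun t : Fin m → ℝ => chainMap P m σ t) := by
  induction m with
  | zero => exact continuous_const
  | succ m ih =>
    have hQ : Continuous (fun t : Fin (m+1) → ℝ =>
        chainMap P m (σ ∘ Fin.castSucc) (t ∘ Fin.castSucc)) := by
      exact (ih (σ ∘ Fin.castSucc)).comp (continuous_pi fun s => continuous_apply _)
    show Continuous (fun t : Fin (m+1) → ℝ => pstep (σ (Fin.last m)) (t (Fin.last m))
      (chainMap P m (σ ∘ Fin.castSucc) (t ∘ Fin.castSucc)))
    apply continuous_pi
    intro k
    simp only [pstep, Function.update_apply]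
    by_cases hk : k = (σ (Fin.last m)).1
    · simp only [hk, if_pos rfl]
      have h1 : Continuous (fun t : Fin (m+1) → ℝ => t (Fin.last m)) := continuous_apply _
      exact ((continuous_const.sub h1).smul ((continuous_apply _).comp hQ)).add
        (h1.smul ((continuous_apply _).comp hQ))
    · simp only [hk, if_neg hk]
      exact (continuous_apply _).comp hQ

lemma chainAux_iff {n : ℕ} (P : Fin n → Pt) (m : ℕ) (P' : Fin n → Pt) :
    ChainAux PullIn P m P' ↔ ∃ σ : Fin m → Fin n × Fin n, (∀ s, (σ s).1 ≠ (σ s).2) ∧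
      ∃ t : Fin m → ℝ, (∀ s, t s ∈ Set.Icc (0:ℝ) 1) ∧ chainMap P m σ t = P' := by
  induction m generalizing P' with
  | zero =>
    constructor
    · intro h
      exact ⟨Fin.elim0, fun s => s.elim0, Fin.elim0, fun s => s.elim0, h.symm⟩
    · rintro ⟨σ, -, t, -, h⟩
      exact h.symm
  | succ m ih =>
    constructor
    · rintro ⟨Mid, hc, i, j, hij, hseg, hrest⟩
      obtain ⟨σ', hσ', t', ht', hM⟩ := (ih Mid).mp hc
      rw [segment_eq_image] at hseg
      obtain ⟨θ, hθI, hθ⟩ := hseg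
      refine ⟨Fin.snoc σ' (i, j), ?_, Fin.snoc t' θ, ?_, ?_⟩
      · intro s
        rcases Fin.eq_castSucc_or_eq_last s with ⟨s', rfl⟩ | rfl
        · rw [Fin.snoc_castSucc]; exact hσ' s'
        · rw [Fin.snoc_last]; exact hij
      · intro s
        rcases Fin.eq_castSucc_or_eq_last s with ⟨s', rfl⟩ | rfl
        · rw [Fin.snoc_castSucc]; exact ht' s'
        · rw [Fin.snoc_last]; exact hθI
      · show pstep _ _ _ = P'
        have e1 : (Fin.snoc σ' (i, j) : Fin (m+1) → _) ∘ Fin.castSucc = σ' := by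
          funext s; exact Fin.snoc_castSucc ..
        have e2 : (Fin.snoc t' θ : Fin (m+1) → ℝ) ∘ Fin.castSucc = t' := by
          funext s; exact Fin.snoc_castSucc ..
        rw [Fin.snoc_last, Fin.snoc_last, e1, e2, hM]
        funext k
        by_cases hk : k = i
        · subst hk
          rw [pstep, Function.update_self]
          simpa using hθ
        · rw [pstep, Function.update_of_ne hk, hrest k hk]
    · rintro ⟨σ, hσ, t, ht, rfl⟩
      show ChainAux PullIn P (m+1) (pstep _ _ _)
      set Q := chainMap P m (σ ∘ Fin.castSucc) (t ∘ Fin.castSucc) with hQ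
      refine ⟨Q, (ih Q).mpr ⟨σ ∘ Fin.castSucc, fun s => hσ _, t ∘ Fin.castSucc,
        fun s => ht _, rfl⟩, (σ (Fin.last m)).1, (σ (Fin.last m)).2, hσ _, ?_, ?_⟩
      · rw [pstep, Function.update_self, segment_eq_image]
        exact ⟨t (Fin.last m), ht _, rfl⟩
      · intro k hk
        rw [pstep, Function.update_of_ne hk]


/-- The set of `n`-gons attainable from `P` in at most `N` pull-in
moves is compact. -/
theorem statement14 (n : ℕ) (P : Fin n → Pt) (N : ℕ) :
    IsCompact {P' : Fin n → Pt | ∃ m : ℕ, m ≤ N ∧ MoveChain PullIn m P P'} := by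
  have hset : {P' : Fin n → Pt | ∃ m : ℕ, m ≤ N ∧ MoveChain PullIn m P P'} =
      ⋃ x : Σ m : Fin (N + 1), {σ : Fin (m : ℕ) → Fin n × Fin n // ∀ s, (σ s).1 ≠ (σ s).2},
        chainMap P (x.1 : ℕ) x.2.1 '' Set.univ.pi (fun _ => Set.Icc (0:ℝ) 1) := by
    ext P'
    simp only [Set.mem_setOf_eq, Set.mem_iUnion, Set.mem_image, Set.mem_pi, Set.mem_univ,
      forall_true_left, Sigma.exists, Subtype.exists]
    constructor
    · rintro ⟨m, hm, hchain⟩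
      rw [moveChain_iff_chainAux, chainAux_iff] at hchain
      obtain ⟨σ, hσ, t, ht, hmap⟩ := hchain
      exact ⟨⟨m, Nat.lt_succ_of_le hm⟩, σ, hσ, t, ht, hmap⟩
    · rintro ⟨m, σ, hσ, t, ht, hmap⟩
      refine ⟨m, Nat.lt_succ_iff.mp m.2, ?_⟩
      rw [moveChain_iff_chainAux, chainAux_iff]
      exact ⟨σ, hσ, t, ht, hmap⟩
  rw [hset]
  exact isCompact_iUnion fun x =>
    (isCompact_univ_pi fun _ => isCompact_Icc).image (chainMap_continuous P _ _)

end
end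

section
/- Let {P(t) : c_0 ≤ t ≤ c_1} be a continuous path of n-gons such that P(t) is set-convex for every t ∈ [c_0, c_1]. If P(c_0) is convex and oriented counterclockwise, then P(c_1) is convex and oriented counterclockwise. -/
noncomputable section

lemma collinear_of_det3 (a b c : Pt) (hab : a ≠ b) (h : det3 a b c = 0) :
    Collinear ℝ ({a, b, c} : Set Pt) := by
  rw [collinear_iff_of_mem (Set.mem_insert a _)]
  refine ⟨b - a, ?_⟩
  have hd : (b 0 - a 0) * (c 1 - a 1) - (b 1 - a 1) * (c 0 - a 0) = 0 := h
  intro p hp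
  have key : ∀ r : ℝ, (r * (b 0 - a 0) = p 0 - a 0) → (r * (b 1 - a 1) = p 1 - a 1) →
      p = r • (b - a) + a := by
    intro r h0 h1
    have : ∀ x : Fin 2, p x = (r • (b - a) + a) x := by
      rw [Fin.forall_fin_two]
      constructor <;>
        simp only [PiLp.add_apply, PiLp.smul_apply, PiLp.sub_apply, smul_eq_mul] <;> linarith
    exact PiLp.ext this
  rcases hp with rfl | rfl | rfl
  · exact ⟨0, key 0 (by ring) (by ring)⟩
  · exact ⟨1, key 1 (by ring) (by ring)⟩
  · by_cases h0 : b 0 - a 0 = 0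
    · by_cases h1 : b 1 - a 1 = 0
      · exfalso
        apply hab
        have : ∀ x : Fin 2, a x = b x := by
          rw [Fin.forall_fin_two]
          constructor <;> linarith
        exact PiLp.ext this
      · have hp0 : p 0 - a 0 = 0 := by
          have hmul : (b 1 - a 1) * (p 0 - a 0) = 0 := by linear_combination -hd + (p 1 - a 1) * h0
          rcases mul_eq_zero.mp hmul with h' | h'
          · exact absurd h' h1
          · exact h'
        refine ⟨(p 1 - a 1) / (b 1 - a 1), key _ ?_ ?_⟩
        · rw [h0, hp0, mul_zero]
        · rw [div_mul_cancel₀ _ h1]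
    · refine ⟨(p 0 - a 0) / (b 0 - a 0), key _ ?_ ?_⟩
      · rw [div_mul_cancel₀ _ h0]
      · rw [div_mul_eq_mul_div, div_eq_iff h0]
        linear_combination -hd

lemma setConvex_mem {n : ℕ} {P : Fin n → Pt} (hP : SetConvex P)
    {i j k : Fin n} (hij : j ≠ i) (hik : k ≠ i) (h : P i ∈ segment ℝ (P j) (P k)) : False := by
  apply hP i
  have hsub : ({P j, P k} : Set Pt) ⊆ P '' {l | l ≠ i} := by
    rintro x (rfl | rfl)
    · exact ⟨j, hij, rfl⟩
    · exact ⟨k, hik, rfl⟩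
  have hh := convexHull_mono hsub (𝕜 := ℝ)
  rw [convexHull_pair] at hh
  exact hh h

lemma det3_ne_zero_of_setConvex {n : ℕ} {P : Fin n → Pt} (hP : SetConvex P)
    {i j k : Fin n} (hij : i ≠ j) (hjk : j ≠ k) (hik : i ≠ k) :
    det3 (P i) (P j) (P k) ≠ 0 := by
  intro hdet
  by_cases hab : P i = P j
  · refine hP i ?_
    rw [hab]
    exact subset_convexHull ℝ _ ⟨j, hij.symm, rfl⟩
  have hcol := collinear_of_det3 _ _ _ hab hdet
  rcases hcol.wbtw_or_wbtw_or_wbtw with hw | hw | hw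
  · exact setConvex_mem hP hij hjk.symm hw.mem_segment
  · exact setConvex_mem hP hjk hik hw.mem_segment
  · exact setConvex_mem hP hik.symm hij.symm hw.mem_segment

/-- Along a continuous path of set-convex polygons, being convex
oriented counterclockwise is preserved. -/
theorem statement15 (n : ℕ) (hn : 3 ≤ n) [NeZero n] (c0 c1 : ℝ) (hc : c0 ≤ c1)
    (F : ℝ → Fin n → Pt) (hcont : ContinuousOn F (Set.Icc c0 c1))
    (hsc : ∀ t ∈ Set.Icc c0 c1, SetConvex (F t))
    (h0 : CCW (F c0)) :
    CCW (F c1) := by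
  intro i j hji hji1
  have hi1 : (i : Fin n) ≠ i + 1 := by
    intro h
    have h10 : (1 : Fin n) = 0 := by
      have := congrArg (fun x => x - i) h
      simpa [sub_self, add_sub_cancel_left] using this.symm
    have hne : (1 : Fin n) ≠ 0 := by
      have h1n : (1 : ℕ) < n := by omega
      exact Fin.ext_iff.not.mpr (by simp [Fin.val_one', Nat.mod_eq_of_lt h1n])
    exact hne h10
  set g : ℝ → ℝ := fun t => det3 (F t i) (F t (i + 1)) (F t j) with hg
  have hgc : ContinuousOn g (Set.Icc c0 c1) := by
    have h1 : ∀ k : Fin n, ContinuousOn (fun t => F t k) (Set.Icc c0 c1) :=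
      fun k => (continuous_apply k).comp_continuousOn hcont
    have h2 : ∀ (k : Fin n) (x : Fin 2), ContinuousOn (fun t => F t k x) (Set.Icc c0 c1) :=
      fun k x => (PiLp.continuous_apply 2 _ x).comp_continuousOn (h1 k)
    unfold g det3
    fun_prop (disch := exact h2 _ _)
  have hgne : ∀ t ∈ Set.Icc c0 c1, g t ≠ 0 := by
    intro t ht
    exact det3_ne_zero_of_setConvex (hsc t ht) hi1 (fun h => hji1 h.symm) (fun h => hji h.symm)
  have hg0 : 0 < g c0 := h0 i j hji hji1
  by_contra hcon
  have hg1 : g c1 < 0 := by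
    rcases lt_trichotomy (g c1) 0 with h | h | h
    · exact h
    · exact absurd h (hgne c1 (Set.right_mem_Icc.mpr hc))
    · exact absurd h hcon
  have hiv := intermediate_value_Icc' hc hgc
  have h0mem : (0 : ℝ) ∈ Set.Icc (g c1) (g c0) := ⟨hg1.le, hg0.le⟩
  obtain ⟨t, ht, htz⟩ := hiv h0mem
  exact hgne t ht htz

end
end
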